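/- arXiv:1403.7120 — 4 statements merged into one kernel-verified Lean document; each statement's English description precedes it below -/
import Mathlib

section
/- (Corollary 4.4, bounded case.) Under the Galerkin setup, let L be a fixed finite-dimensional subspace of H with orthogonal projection P, assume δ(L(Δ), L) < 1, let γ := min(σ(EPE) \ {0}), and let M_n be the span of the eigenvectors of Q_n P Q_n with eigenvalues in [γ/2, 1]. If in addition δ(L_n(Δ), L(Δ)) → 0, then for all sufficiently large n one has M_n = L_n(Δ), and consequently σ(A, M_n) = σ(A, L_n) ∩ Δ. -/
set_option linter.unusedSectionVars false
set_option maxHeartbeats 1000000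


open Filter Metric
open scoped InnerProductSpace

noncomputable section

variable {H : Type*} [NormedAddCommGroup H] [InnerProductSpace ℂ H] [CompleteSpace H]

/-- `δ(L, M)`: the supremum over unit vectors `u ∈ L` of `dist(u, M)`
(interpreted as `0` when `L` has no unit vectors). -/
def subDelta (L M : Submodule ℂ H) : ℝ :=
  sSup ((fun u => Metric.infDist u (M : Set H)) '' {u : H | u ∈ L ∧ ‖u‖ = 1})

/-- `δ̂(L, M) = max (δ(L,M), δ(M,L))`. -/
def subDeltaHat (L M : Submodule ℂ H) : ℝ := max (subDelta L M) (subDelta M L)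

/-- `u` is a Galerkin eigenvector of `A` relative to the subspace `L` with eigenvalue `μ`:
`u ∈ L`, `u ≠ 0` and `⟨A u, v⟩ = μ ⟨u, v⟩` for all `v ∈ L`. -/
def IsGalerkinEigenpair (A : H →L[ℂ] H) (L : Submodule ℂ H) (μ : ℝ) (u : H) : Prop :=
  u ∈ L ∧ u ≠ 0 ∧ ∀ v ∈ L, ⟪A u, v⟫_ℂ = (μ : ℂ) * ⟪u, v⟫_ℂ

/-- `σ(A, L)`: the Galerkin eigenvalues of `A` relative to `L`. -/
def galerkinSpectrum (A : H →L[ℂ] H) (L : Submodule ℂ H) : Set ℝ :=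
  {μ | ∃ u, IsGalerkinEigenpair A L μ u}

/-- `L(Δ)`-type subspace: the span of the Galerkin eigenvectors of `A` relative to `L`
whose eigenvalues lie in `[a, b]`. -/
def galerkinSubspace (A : H →L[ℂ] H) (L : Submodule ℂ H) (a b : ℝ) : Submodule ℂ H :=
  Submodule.span ℂ {u | ∃ μ ∈ Set.Icc a b, IsGalerkinEigenpair A L μ u}

/-- The span of the eigenvectors of `T` whose (real) eigenvalues lie in the set `s`. -/
def eigSpan (T : H →L[ℂ] H) (s : Set ℝ) : Submodule ℂ H :=
  Submodule.span ℂ {u | u ≠ 0 ∧ ∃ μ ∈ s, T u = (μ : ℂ) • u}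



lemma sa_inner (B : H →L[ℂ] H) (hB : IsSelfAdjoint B) (x y : H) :
    ⟪B x, y⟫_ℂ = ⟪x, B y⟫_ℂ := by
  rw [ContinuousLinearMap.isSelfAdjoint_iff'] at hB
  conv_lhs => rw [← hB]
  exact ContinuousLinearMap.adjoint_inner_left B y x

lemma inner_orthProj (V : Submodule ℂ H) [CompleteSpace V] (z : H) {v : H} (hv : v ∈ V) :
    ⟪(Submodule.orthogonalProjectionOnto V z : H), v⟫_ℂ = ⟪z, v⟫_ℂ := by
  have h := Submodule.starProjection_inner_eq_zero (K := V) z v hv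
  rw [inner_sub_left, sub_eq_zero] at h
  exact h.symm

/-- Compression of `B` to the subspace `V`. -/
def compr (B : H →L[ℂ] H) (V : Submodule ℂ H) [CompleteSpace V] : V →ₗ[ℂ] V :=
  (Submodule.orthogonalProjectionOnto V).toLinearMap ∘ₗ (B.toLinearMap ∘ₗ V.subtype)

lemma compr_apply (B : H →L[ℂ] H) (V : Submodule ℂ H) [CompleteSpace V] (x : V) :
    compr B V x = Submodule.orthogonalProjectionOnto V (B x) := rfl

lemma compr_coe (B : H →L[ℂ] H) (V : Submodule ℂ H) [CompleteSpace V] (x : V)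
    (h : B x ∈ V) : (compr B V x : H) = B x := by
  rw [compr_apply]
  exact congrArg Subtype.val (Submodule.orthogonalProjectionOnto_mem_subspace_eq_self (⟨B x, h⟩ : V))

lemma compr_isSymmetric (B : H →L[ℂ] H) (hB : IsSelfAdjoint B) (V : Submodule ℂ H)
    [CompleteSpace V] : (compr B V).IsSymmetric := by
  intro x y
  rw [Submodule.coe_inner, Submodule.coe_inner, compr_apply, compr_apply,
    inner_orthProj V _ y.2, ← inner_conj_symm (x : H), inner_orthProj V _ x.2,
    inner_conj_symm, sa_inner B hB]

lemma re_inner_le_norm' (x y : H) : (⟪x, y⟫_ℂ).re ≤ ‖x‖ * ‖y‖ := by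
  simpa using re_inner_le_norm (𝕜 := ℂ) x y

lemma proj_inner_compl (P : H →L[ℂ] H) (hPi : IsIdempotentElem P) (hPs : IsSelfAdjoint P)
    (y : H) : ⟪P y, y - P y⟫_ℂ = 0 := by
  rw [sa_inner P hPs]
  have h : P (y - P y) = 0 := by
    rw [map_sub, ← ContinuousLinearMap.mul_apply P P y, hPi.eq, sub_self]
  rw [h, inner_zero_right]

lemma proj_inner_self (P : H →L[ℂ] H) (hPi : IsIdempotentElem P) (hPs : IsSelfAdjoint P)
    (y : H) : ⟪P y, y⟫_ℂ = ((‖P y‖ : ℂ) ^ 2) := by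
  have hy : P y + (y - P y) = y := by abel
  have h := inner_add_right (𝕜 := ℂ) (P y) (P y) (y - P y)
  rw [hy, proj_inner_compl P hPi hPs, add_zero, inner_self_eq_norm_sq_to_K] at h
  exact h

lemma proj_norm_le (P : H →L[ℂ] H) (hPi : IsIdempotentElem P) (hPs : IsSelfAdjoint P)
    (y : H) : ‖P y‖ ≤ ‖y‖ := by
  have h1 : ((‖P y‖ : ℝ) ^ 2 : ℝ) = (⟪P y, y⟫_ℂ).re := by
    rw [proj_inner_self P hPi hPs, ← Complex.ofReal_pow, Complex.ofReal_re]
  have h2 := re_inner_le_norm' (P y) y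
  nlinarith [norm_nonneg (P y), norm_nonneg y]

lemma dist_proj_le (P : H →L[ℂ] H) (hPi : IsIdempotentElem P) (hPs : IsSelfAdjoint P)
    (u : H) {w : H} (hw : w ∈ LinearMap.range (P : H →ₗ[ℂ] H)) : ‖u - P u‖ ≤ ‖u - w‖ := by
  have horth : ⟪u - P u, P u - w⟫_ℂ = 0 := by
    obtain ⟨z, rfl⟩ : ∃ z, P z = w := hw
    rw [show P u - P z = P (u - z) from (map_sub P u z).symm, ← sa_inner P hPs]
    have h : P (u - P u) = 0 := by
      rw [map_sub, ← ContinuousLinearMap.mul_apply P P u, hPi.eq, sub_self]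
    rw [h, inner_zero_left]
  have hpyth := norm_add_sq_eq_norm_sq_add_norm_sq_of_inner_eq_zero _ _ horth
  have huw : u - w = (u - P u) + (P u - w) := by abel
  rw [huw]
  nlinarith [norm_nonneg (u - P u), norm_nonneg (P u - w), norm_nonneg ((u - P u) + (P u - w))]

lemma le_of_sq_le_sq' {x y : ℝ} (h : x ^ 2 ≤ y ^ 2) (hy : 0 ≤ y) : x ≤ y := by
  nlinarith [sq_nonneg (x - y), sq_nonneg (x + y)]

lemma span_le_eigSpan (B : H →L[ℂ] H) (hB : IsSelfAdjoint B) (V : Submodule ℂ H)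
    [FiniteDimensional ℂ V] (hBV : ∀ x ∈ V, B x ∈ V) (c₁ c₂ : ℝ)
    (hq : ∀ x ∈ V, ‖x‖ = 1 → c₁ ≤ (⟪B x, x⟫_ℂ).re ∧ (⟪B x, x⟫_ℂ).re ≤ c₂) :
    V ≤ eigSpan B (Set.Icc c₁ c₂) := by
  have hTs := compr_isSymmetric B hB V
  have hn : Module.finrank ℂ V = Module.finrank ℂ V := rfl
  set b := hTs.eigenvectorBasis hn with hbdef
  set lam := hTs.eigenvalues hn with hlamdef
  have heig : ∀ i, B (b i : H) = ((lam i : ℝ) : ℂ) • (b i : H) := by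
    intro i
    have h1 : compr B V (b i) = ((lam i : ℂ)) • b i := hTs.apply_eigenvectorBasis hn i
    have h2 := compr_coe B V (b i) (hBV _ (b i).2)
    rw [h1] at h2
    simpa using h2.symm
  have hnormb : ∀ i, ‖(b i : H)‖ = 1 := fun i => b.orthonormal.1 i
  have hmem : ∀ i, ((b i : H)) ∈ eigSpan B (Set.Icc c₁ c₂) := by
    intro i
    refine Submodule.subset_span ⟨?_, lam i, ?_, heig i⟩
    · intro h0
      have := hnormb i
      rw [h0] at this; simp at this
    · have hval : (⟪B (b i : H), (b i : H)⟫_ℂ).re = lam i := by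
        rw [heig i, inner_smul_left, inner_self_eq_norm_sq_to_K, hnormb i]
        simp
      have hq' := hq _ (b i).2 (hnormb i)
      rw [hval] at hq'
      exact hq'
  intro x hx
  have hxeq : x = ∑ i, b.repr ⟨x, hx⟩ i • (b i : H) := by
    conv_lhs => rw [show x = ((⟨x, hx⟩ : V) : H) from rfl, ← b.sum_repr ⟨x, hx⟩]
    push_cast
    rfl
  rw [hxeq]
  exact Submodule.sum_mem _ fun i _ => Submodule.smul_mem _ _ (hmem i)

lemma quad_lb {n : ℕ} (B : H →L[ℂ] H) (V : Submodule ℂ H)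
    [FiniteDimensional ℂ V] (b : OrthonormalBasis (Fin n) ℂ V) (lam : Fin n → ℝ)
    (heig : ∀ i, B (b i : H) = ((lam i : ℝ) : ℂ) • (b i : H)) (m : ℝ)
    (hml : ∀ i, m ≤ lam i) : ∀ w ∈ V, m * ‖w‖ ^ 2 ≤ (⟪B w, w⟫_ℂ).re := by
  intro w hw
  set c : Fin n → ℂ := fun i => b.repr ⟨w, hw⟩ i with hc
  have hwsum : w = ∑ i, c i • (b i : H) := by
    conv_lhs => rw [show w = ((⟨w, hw⟩ : V) : H) from rfl, ← b.sum_repr ⟨w, hw⟩]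
    push_cast
    rfl
  have hinner_b : ∀ i, ⟪(b i : H), w⟫_ℂ = c i := by
    intro i
    rw [hc]
    simp only [OrthonormalBasis.repr_apply_apply]
    rw [Submodule.coe_inner]
  have hBw : B w = ∑ i, (c i * (lam i : ℂ)) • (b i : H) := by
    conv_lhs => rw [hwsum]
    rw [map_sum]
    congr 1; ext i
    rw [ContinuousLinearMap.map_smul, heig i, smul_smul]
  have hBinner : ⟪B w, w⟫_ℂ = ∑ i, (lam i : ℂ) * (starRingEnd ℂ (c i) * c i) := by
    rw [hBw, sum_inner]
    congr 1; ext i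
    rw [inner_smul_left, hinner_b i, map_mul, Complex.conj_ofReal]
    ring
  have hwinner : (‖w‖ : ℝ) ^ 2 = ∑ i, (starRingEnd ℂ (c i) * c i).re := by
    have h1 : ⟪w, w⟫_ℂ = ∑ i, starRingEnd ℂ (c i) * c i := by
      nth_rewrite 1 [hwsum]
      rw [sum_inner]
      congr 1; ext i
      rw [inner_smul_left, hinner_b i]
    have h2 : (⟪w, w⟫_ℂ).re = ‖w‖ ^ 2 := by
      simpa using inner_self_eq_norm_sq (𝕜 := ℂ) w
    rw [← h2, h1, Complex.re_sum]
  have hre : (⟪B w, w⟫_ℂ).re = ∑ i, lam i * (starRingEnd ℂ (c i) * c i).re := by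
    rw [hBinner, Complex.re_sum]
    congr 1; ext i
    have : (starRingEnd ℂ (c i) * c i) = ((Complex.normSq (c i) : ℝ) : ℂ) := by
      rw [Complex.normSq_eq_conj_mul_self]
    rw [this, ← Complex.ofReal_mul]
    simp
  rw [hre, hwinner, Finset.mul_sum]
  apply Finset.sum_le_sum
  intro i _
  have hnn : 0 ≤ (starRingEnd ℂ (c i) * c i).re := by
    rw [← Complex.normSq_eq_conj_mul_self]
    simpa using Complex.normSq_nonneg (c i)
  exact mul_le_mul_of_nonneg_right (hml i) hnn

theorem stmt1
    (A : H →L[ℂ] H) (hA : IsSelfAdjoint A)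
    (a b : ℝ) (hab : a < b)
    (ha : a ∉ spectrum ℝ A) (hb : b ∉ spectrum ℝ A)
    (f : ℝ → ℝ) (hf : ContinuousOn f (spectrum ℝ A))
    (hf1 : ∀ x ∈ spectrum ℝ A ∩ Set.Icc a b, f x = 1)
    (hf0 : ∀ x ∈ spectrum ℝ A \ Set.Icc a b, f x = 0)
    (E : H →L[ℂ] H) (hE : E = cfc f A)
    (d : ℕ) (hd1 : 1 ≤ d)
    [FiniteDimensional ℂ (LinearMap.range (E : H →ₗ[ℂ] H))]
    (hd : Module.finrank ℂ (LinearMap.range (E : H →ₗ[ℂ] H)) = d)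
    (L : ℕ → Submodule ℂ H) [∀ n, FiniteDimensional ℂ (L n)]
    (hL : ∀ u : H, Tendsto (fun n => Metric.infDist u ((L n : Set H))) atTop (nhds 0))
    (Q : ℕ → (H →L[ℂ] H))
    (hQ : ∀ n, IsIdempotentElem (Q n) ∧ IsSelfAdjoint (Q n) ∧
      LinearMap.range (Q n : H →ₗ[ℂ] H) = galerkinSubspace A (L n) a b)
    -- the fixed finite-dimensional subspace `𝓛` with orthogonal projection `P`
    (𝓛 : Submodule ℂ H) [FiniteDimensional ℂ 𝓛]
    (P : H →L[ℂ] H)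
    (hP : IsIdempotentElem P ∧ IsSelfAdjoint P ∧ LinearMap.range (P : H →ₗ[ℂ] H) = 𝓛)
    (hsep : subDelta (LinearMap.range (E : H →ₗ[ℂ] H)) 𝓛 < 1)
    -- `γ := min (σ(EPE) \ {0})`
    (γ : ℝ) (hγ : γ = sInf (spectrum ℝ (E * P * E) \ {0}))
    -- `M n` is the span of eigenvectors of `Qₙ P Qₙ` with eigenvalues in `[γ/2, 1]`
    (M : ℕ → Submodule ℂ H)
    (hM : ∀ n, M n = eigSpan (Q n * P * Q n) (Set.Icc (γ / 2) 1))
    -- no spectral pollution: `δ(Lₙ(Δ), L(Δ)) → 0`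
    (hnopoll : Tendsto
      (fun n => subDelta (galerkinSubspace A (L n) a b) (LinearMap.range (E : H →ₗ[ℂ] H)))
      atTop (nhds 0)) :
    ∀ᶠ n in atTop,
      M n = galerkinSubspace A (L n) a b ∧
      galerkinSpectrum A (M n) = galerkinSpectrum A (L n) ∩ Set.Icc a b := by
  obtain ⟨hPi, hPs, hPr⟩ := hP
  -- basic facts about `E`
  have hEsa : IsSelfAdjoint E := by rw [hE]; exact cfc_predicate f A
  have hEidem : E * E = E := by
    rw [hE, ← cfc_mul f f A hf hf]
    refine cfc_congr fun x hx => ?_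
    by_cases hxΔ : x ∈ Set.Icc a b
    · simp [hf1 x ⟨hx, hxΔ⟩]
    · simp [hf0 x ⟨hx, hxΔ⟩]
  set V := LinearMap.range (E : H →ₗ[ℂ] H) with hVdef
  have hEfix : ∀ u ∈ V, E u = u := by
    rintro u hu
    obtain ⟨y, rfl⟩ : ∃ y, E y = u := hu
    conv_lhs => rw [← ContinuousLinearMap.mul_apply, hEidem]
  set B₀ := E * P * E with hB₀def
  have hB₀sa : IsSelfAdjoint B₀ := by
    have h := hPs.conjugate E
    rwa [hEsa.star_eq] at h
  have hB₀mem : ∀ x, B₀ x ∈ V := fun x => by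
    rw [hB₀def, ContinuousLinearMap.mul_apply]
    exact LinearMap.mem_range_self _ _
  have hquadB : ∀ u ∈ V, (⟪B₀ u, u⟫_ℂ).re = ‖P u‖ ^ 2 := by
    intro u hu
    have h1 : B₀ u = E (P u) := by
      rw [hB₀def, ContinuousLinearMap.mul_apply, ContinuousLinearMap.mul_apply, hEfix u hu]
    rw [h1, sa_inner E hEsa, hEfix u hu, proj_inner_self P hPi hPs, ← Complex.ofReal_pow,
      Complex.ofReal_re]
  -- spectral basis of the compression of `B₀` to `V`
  have hTs := compr_isSymmetric B₀ hB₀sa V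
  set bas := hTs.eigenvectorBasis hd with hbas
  set lam := hTs.eigenvalues hd with hlamdef
  have heig : ∀ i, B₀ ((bas i : H)) = ((lam i : ℝ) : ℂ) • (bas i : H) := by
    intro i
    have h1 : compr B₀ V (bas i) = ((lam i : ℂ)) • bas i := hTs.apply_eigenvectorBasis hd i
    have h2 := compr_coe B₀ V (bas i) (hB₀mem _)
    rw [h1] at h2
    simpa using h2.symm
  have hnormb : ∀ i, ‖(bas i : H)‖ = 1 := fun i => bas.orthonormal.1 i
  have hbasmem : ∀ i, (bas i : H) ∈ V := fun i => (bas i).2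
  have hbasne : ∀ i, (bas i : H) ≠ 0 := by
    intro i h0
    have h := hnormb i
    rw [h0] at h; simp at h
  set δ := subDelta V 𝓛 with hδdef
  have hdistle : ∀ u ∈ V, ‖u‖ = 1 → ‖u - P u‖ ≤ δ := by
    intro u hu hnorm
    have h1 : ‖u - P u‖ ≤ infDist u (𝓛 : Set H) := by
      by_contra hcon
      push_neg at hcon
      obtain ⟨y, hy, hdy⟩ := (infDist_lt_iff ⟨0, 𝓛.zero_mem⟩).mp hcon
      rw [dist_eq_norm] at hdy
      have hyP : y ∈ LinearMap.range (P : H →ₗ[ℂ] H) := by rw [hPr]; exact hy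
      exact absurd hdy (not_lt.mpr (dist_proj_le P hPi hPs u hyP))
    refine h1.trans (le_csSup ?_ ?_)
    · refine ⟨1, ?_⟩
      rintro r ⟨u', ⟨hu', hn'⟩, rfl⟩
      calc infDist u' (𝓛 : Set H) ≤ dist u' 0 := infDist_le_dist_of_mem 𝓛.zero_mem
        _ = 1 := by rw [dist_zero_right, hn']
    · exact ⟨u, ⟨hu, hnorm⟩, rfl⟩
  have hδ0 : 0 ≤ δ :=
    le_trans (norm_nonneg _) (hdistle _ (hbasmem ⟨0, hd1⟩) (hnormb ⟨0, hd1⟩))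
  have hδ1 : δ < 1 := hsep
  have hPsq : ∀ u ∈ V, ‖u‖ = 1 → 1 - δ ^ 2 ≤ ‖P u‖ ^ 2 := by
    intro u hu hn
    have h1 := hdistle u hu hn
    have horth := proj_inner_compl P hPi hPs u
    have hpyth := norm_add_sq_eq_norm_sq_add_norm_sq_of_inner_eq_zero _ _ horth
    rw [show P u + (u - P u) = u by abel] at hpyth
    have hnn := norm_nonneg (u - P u)
    nlinarith [hn]
  have hlam_eq : ∀ i, lam i = ‖P (bas i : H)‖ ^ 2 := by
    intro i
    have h := hquadB _ (hbasmem i)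
    rw [heig i, inner_smul_left, Complex.conj_ofReal, inner_self_eq_norm_sq_to_K,
      hnormb i] at h
    simpa using h
  have hlam_lb : ∀ i, 1 - δ ^ 2 ≤ lam i := fun i =>
    (hlam_eq i) ▸ hPsq _ (hbasmem i) (hnormb i)
  have hlam_pos : ∀ i, 0 < lam i := by
    intro i
    have := hlam_lb i
    nlinarith
  have hlam_le1 : ∀ i, lam i ≤ 1 := by
    intro i
    rw [hlam_eq i]
    have h := proj_norm_le P hPi hPs (bas i : H)
    rw [hnormb i] at h
    nlinarith [norm_nonneg (P (bas i : H))]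
  -- nontriviality
  haveI hHnt : Nontrivial H := ⟨(bas ⟨0, hd1⟩ : H), 0, hbasne _⟩
  haveI hCLMnt : Nontrivial (H →L[ℂ] H) := by
    refine ⟨1, 0, fun h => hbasne ⟨0, hd1⟩ ?_⟩
    simpa using congrArg (fun T : H →L[ℂ] H => T (bas ⟨0, hd1⟩ : H)) h
  -- every nonzero real spectrum point of `B₀` is one of the `lam i`
  have hspec_sub : spectrum ℝ B₀ \ {0} ⊆ Set.range lam := by
    rintro μ ⟨hμs, hμ0⟩
    have hμ0' : μ ≠ 0 := by simpa using hμ0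
    have hμC : (μ : ℂ) ∈ spectrum ℂ B₀ := by
      have h := (spectrum.algebraMap_mem_iff (R := ℝ) (S := ℂ)
        (A := H →L[ℂ] H) (a := B₀) (r := μ)).mpr hμs
      rwa [Complex.coe_algebraMap] at h
    set q : Polynomial ℂ := ∏ i : Fin d, (Polynomial.X - Polynomial.C ((lam i : ℝ) : ℂ))
      with hq
    have hq0 : ∀ y ∈ V, (Polynomial.aeval B₀ q) y = 0 := by
      intro y hy
      have hysum : y = ∑ i, bas.repr ⟨y, hy⟩ i • (bas i : H) := by
        conv_lhs => rw [show y = ((⟨y, hy⟩ : V) : H) from rfl, ← bas.sum_repr ⟨y, hy⟩]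
        push_cast
        rfl
      rw [hysum, map_sum]
      refine Finset.sum_eq_zero fun j _ => ?_
      rw [map_smul]
      have hfac : q = (∏ i ∈ Finset.univ.erase j,
          (Polynomial.X - Polynomial.C ((lam i : ℝ) : ℂ))) *
          (Polynomial.X - Polynomial.C ((lam j : ℝ) : ℂ)) := by
        rw [hq, ← Finset.prod_erase_mul Finset.univ _ (Finset.mem_univ j)]
      have hzero : (Polynomial.aeval B₀ (Polynomial.X - Polynomial.C ((lam j : ℝ) : ℂ)))
          ((bas j : H)) = 0 := by
        rw [map_sub, Polynomial.aeval_X, Polynomial.aeval_C, ContinuousLinearMap.sub_apply,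
          heig j, Algebra.algebraMap_eq_smul_one, ContinuousLinearMap.smul_apply,
          ContinuousLinearMap.one_apply, sub_self]
      rw [hfac, map_mul, ContinuousLinearMap.mul_apply, hzero, map_zero, smul_zero]
    have hp0 : Polynomial.aeval B₀ (Polynomial.X * q) = 0 := by
      ext x
      rw [mul_comm, map_mul, ContinuousLinearMap.mul_apply, Polynomial.aeval_X,
        hq0 (B₀ x) (hB₀mem x), ContinuousLinearMap.zero_apply]
    have hev : Polynomial.eval (μ : ℂ) (Polynomial.X * q) ∈
        spectrum ℂ (0 : H →L[ℂ] H) := by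
      rw [← hp0]
      exact spectrum.subset_polynomial_aeval B₀ (Polynomial.X * q) ⟨(μ : ℂ), hμC, rfl⟩
    rw [spectrum.zero_eq] at hev
    simp only [Set.mem_singleton_iff, Polynomial.eval_mul, Polynomial.eval_X] at hev
    have hq_ev : Polynomial.eval (μ : ℂ) q = 0 := by
      rcases mul_eq_zero.mp hev with h | h
      · exact absurd (by exact_mod_cast h) hμ0'
      · exact h
    rw [hq, Polynomial.eval_prod] at hq_ev
    obtain ⟨i, -, hi⟩ := Finset.prod_eq_zero_iff.mp hq_ev
    refine ⟨i, ?_⟩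
    rw [Polynomial.eval_sub, Polynomial.eval_X, Polynomial.eval_C, sub_eq_zero] at hi
    exact_mod_cast hi.symm
  -- the minimal eigenvalue belongs to the spectrum
  obtain ⟨i₀, -, hi₀⟩ := Finset.exists_min_image Finset.univ lam ⟨⟨0, hd1⟩, Finset.mem_univ _⟩
  have hmem_spec : lam i₀ ∈ spectrum ℝ B₀ \ {0} := by
    constructor
    · rw [spectrum.mem_iff]
      intro hunit
      obtain ⟨unit, huu⟩ := hunit
      have happ : (algebraMap ℝ (H →L[ℂ] H) (lam i₀) - B₀) ((bas i₀ : H)) = 0 := by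
        rw [ContinuousLinearMap.sub_apply, heig i₀, Algebra.algebraMap_eq_smul_one,
          ContinuousLinearMap.smul_apply, ContinuousLinearMap.one_apply,
          ← Complex.coe_smul, sub_self]
      have hiv : ((unit⁻¹ : (H →L[ℂ] H)ˣ) : H →L[ℂ] H)
          ((algebraMap ℝ (H →L[ℂ] H) (lam i₀) - B₀) ((bas i₀ : H))) = (bas i₀ : H) := by
        rw [← ContinuousLinearMap.mul_apply, ← huu, Units.inv_mul,
          ContinuousLinearMap.one_apply]
      rw [happ, map_zero] at hiv
      exact hbasne i₀ hiv.symm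
    · simpa using (hlam_pos i₀).ne'
  have hγ_le : γ ≤ lam i₀ := by
    rw [hγ]
    refine csInf_le ⟨lam i₀, ?_⟩ hmem_spec
    rintro μ hμ
    obtain ⟨i, rfl⟩ := hspec_sub hμ
    exact hi₀ i (Finset.mem_univ i)
  have hγ_ge : lam i₀ ≤ γ := by
    rw [hγ]
    refine le_csInf ⟨_, hmem_spec⟩ fun μ hμ => ?_
    obtain ⟨i, rfl⟩ := hspec_sub hμ
    exact hi₀ i (Finset.mem_univ i)
  have hγ_pos : 0 < γ := lt_of_lt_of_le (hlam_pos i₀) hγ_ge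
  have hγ_lam : ∀ i, γ ≤ lam i := fun i => hγ_le.trans (hi₀ i (Finset.mem_univ i))
  have hγ_le1 : γ ≤ 1 := hγ_le.trans (hlam_le1 i₀)
  have hPw_lb : ∀ w ∈ V, γ * ‖w‖ ^ 2 ≤ ‖P w‖ ^ 2 := by
    intro w hw
    have h := quad_lb B₀ V bas lam heig γ hγ_lam w hw
    rwa [hquadB w hw] at h
  -- the eventual statement
  have hEv : ∀ᶠ n in atTop, subDelta (galerkinSubspace A (L n) a b) V < γ / 10 :=
    hnopoll.eventually_lt_const (by positivity)
  filter_upwards [hEv] with n hδn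
  obtain ⟨hQi, hQs, hQr⟩ := hQ n
  set G := galerkinSubspace A (L n) a b with hG
  have hGL : G ≤ L n := by
    refine Submodule.span_le.mpr fun u hu => ?_
    obtain ⟨ν, hν, h1, -, -⟩ := hu
    exact h1
  haveI : FiniteDimensional ℂ G := Submodule.finiteDimensional_of_le hGL
  set Bn := Q n * P * Q n with hBn
  have hBnsa : IsSelfAdjoint Bn := by
    have h := hPs.conjugate (Q n)
    rwa [hQs.star_eq] at h
  have hBn_mem : ∀ x, Bn x ∈ G := fun x => by
    rw [hBn, ContinuousLinearMap.mul_apply]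
    rw [← hQr]
    exact LinearMap.mem_range_self _ _
  have hQfix : ∀ u ∈ G, Q n u = u := by
    intro u hu
    rw [← hQr] at hu
    obtain ⟨y, rfl⟩ : ∃ y, Q n y = u := hu
    conv_lhs => rw [← ContinuousLinearMap.mul_apply, hQi.eq]
  have hquadn : ∀ u ∈ G, ‖u‖ = 1 →
      γ / 2 ≤ (⟪Bn u, u⟫_ℂ).re ∧ (⟪Bn u, u⟫_ℂ).re ≤ 1 := by
    intro u hu hn1
    have hBu : (⟪Bn u, u⟫_ℂ).re = ‖P u‖ ^ 2 := by
      have h1 : Bn u = Q n (P u) := by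
        rw [hBn, ContinuousLinearMap.mul_apply, ContinuousLinearMap.mul_apply, hQfix u hu]
      rw [h1, sa_inner _ hQs, hQfix u hu, proj_inner_self P hPi hPs, ← Complex.ofReal_pow,
        Complex.ofReal_re]
    rw [hBu]
    constructor
    · have hinf : infDist u (V : Set H) < γ / 10 := by
        refine lt_of_le_of_lt (le_csSup ?_ ?_) hδn
        · refine ⟨1, ?_⟩
          rintro r ⟨u', ⟨hu', hn'⟩, rfl⟩
          calc infDist u' (V : Set H) ≤ dist u' 0 := infDist_le_dist_of_mem V.zero_mem
            _ = 1 := by rw [dist_zero_right, hn']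
        · exact ⟨u, ⟨hu, hn1⟩, rfl⟩
      obtain ⟨w, hwV, hdw⟩ := (infDist_lt_iff ⟨0, V.zero_mem⟩).mp hinf
      rw [dist_eq_norm] at hdw
      set g := Real.sqrt γ with hg
      have hg2 : g ^ 2 = γ := Real.sq_sqrt hγ_pos.le
      have hg0 : 0 ≤ g := Real.sqrt_nonneg _
      have hg1 : g ≤ 1 := by nlinarith
      have hwn : 1 - γ / 10 ≤ ‖w‖ := by
        have h := norm_sub_norm_le u w
        rw [hn1] at h
        linarith
      have hPw : g * ‖w‖ ≤ ‖P w‖ := by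
        refine le_of_sq_le_sq' ?_ (norm_nonneg _)
        rw [mul_pow, hg2]
        exact hPw_lb w hwV
      have hPu : g * (1 - γ / 10) - γ / 10 ≤ ‖P u‖ := by
        have h3 : ‖P w‖ - ‖P (w - u)‖ ≤ ‖P u‖ := by
          have h := norm_sub_norm_le (P w) (P u)
          rw [← map_sub] at h
          linarith
        have h4 : ‖P (w - u)‖ ≤ ‖w - u‖ := proj_norm_le P hPi hPs _
        have h5 : ‖w - u‖ = ‖u - w‖ := norm_sub_rev _ _
        have h6 : g * (1 - γ / 10) ≤ g * ‖w‖ := by nlinarith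
        nlinarith
      have hγg : γ ≤ g := by nlinarith
      have h8 : (4 / 5) * g ≤ ‖P u‖ := by nlinarith
      have h9 := pow_le_pow_left₀ (by positivity : (0:ℝ) ≤ 4 / 5 * g) h8 2
      nlinarith [h9]
    · have h := proj_norm_le P hPi hPs u
      rw [hn1] at h
      nlinarith [norm_nonneg (P u)]
  have hMG : M n = G := by
    rw [hM n]
    apply le_antisymm
    · refine Submodule.span_le.mpr ?_
      rintro u ⟨hu0, μ, hμIcc, hueq⟩
      have hμpos : (0 : ℝ) < μ := lt_of_lt_of_le (by linarith) hμIcc.1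
      have heq : u = (μ : ℂ)⁻¹ • Bn u := by
        rw [hueq, smul_smul, inv_mul_cancel₀ (by exact_mod_cast hμpos.ne'), one_smul]
      rw [heq]
      exact Submodule.smul_mem _ _ (hBn_mem u)
    · exact span_le_eigSpan Bn hBnsa G (fun x _ => hBn_mem x) (γ / 2) 1 hquadn
  refine ⟨hMG, ?_⟩
  rw [hMG]
  -- the spectra coincide
  have hAnG : ∀ x ∈ G, ((Submodule.orthogonalProjectionOnto (L n) (A x) : H)) ∈ G := by
    intro x hx
    have hx' : x ∈ Submodule.span ℂ
        {u | ∃ μ ∈ Set.Icc a b, IsGalerkinEigenpair A (L n) μ u} := hx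
    clear hx
    induction hx' using Submodule.span_induction with
    | mem w hw =>
      obtain ⟨ν, hν, hwL, hw0, hweq⟩ := hw
      have hkey : (Submodule.orthogonalProjectionOnto (L n) (A w) : H) = (ν : ℂ) • w := by
        have hz : (Submodule.orthogonalProjectionOnto (L n) (A w) : H) - (ν : ℂ) • w ∈ L n :=
          Submodule.sub_mem _ (Submodule.orthogonalProjectionOnto (L n) (A w)).2
            (Submodule.smul_mem _ _ hwL)
        have hzv : ∀ v ∈ L n,
            ⟪(Submodule.orthogonalProjectionOnto (L n) (A w) : H) - (ν : ℂ) • w, v⟫_ℂ = 0 := by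
          intro v hv
          rw [inner_sub_left, inner_orthProj _ _ hv, hweq v hv, inner_smul_left,
            Complex.conj_ofReal]
          ring
        have h := hzv _ hz
        rw [inner_self_eq_zero] at h
        exact sub_eq_zero.mp h
      rw [hkey]
      exact Submodule.smul_mem _ _ (Submodule.subset_span ⟨ν, hν, hwL, hw0, hweq⟩)
    | zero => simp
    | add x y hx hy ihx ihy =>
      have : (Submodule.orthogonalProjectionOnto (L n) (A (x + y)) : H) =
          (Submodule.orthogonalProjectionOnto (L n) (A x) : H) + (Submodule.orthogonalProjectionOnto (L n) (A y) : H) := by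
        rw [map_add, map_add]
        rfl
      rw [this]
      exact Submodule.add_mem _ ihx ihy
    | smul c x hx ih =>
      have : (Submodule.orthogonalProjectionOnto (L n) (A (c • x)) : H) =
          c • (Submodule.orthogonalProjectionOnto (L n) (A x) : H) := by
        rw [map_smul, map_smul]
        rfl
      rw [this]
      exact Submodule.smul_mem _ _ ih
  ext μ
  simp only [galerkinSpectrum, Set.mem_inter_iff, Set.mem_setOf_eq]
  constructor
  · rintro ⟨u, huG, hu0, hueq⟩
    have huL : u ∈ L n := hGL huG
    have hproj : (Submodule.orthogonalProjectionOnto (L n) (A u) : H) = (μ : ℂ) • u := by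
      have hz : (Submodule.orthogonalProjectionOnto (L n) (A u) : H) - (μ : ℂ) • u ∈ G :=
        Submodule.sub_mem _ (hAnG u huG) (Submodule.smul_mem _ _ huG)
      have hzv : ∀ v ∈ G,
          ⟪(Submodule.orthogonalProjectionOnto (L n) (A u) : H) - (μ : ℂ) • u, v⟫_ℂ = 0 := by
        intro v hv
        rw [inner_sub_left, inner_orthProj _ _ (hGL hv), hueq v hv, inner_smul_left,
          Complex.conj_ofReal]
        ring
      have h := hzv _ hz
      rw [inner_self_eq_zero] at h
      exact sub_eq_zero.mp h
    have heqL : ∀ v ∈ L n, ⟪A u, v⟫_ℂ = (μ : ℂ) * ⟪u, v⟫_ℂ := by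
      intro v hv
      rw [← inner_orthProj (L n) (A u) hv, hproj, inner_smul_left, Complex.conj_ofReal]
    have hμΔ : μ ∈ Set.Icc a b := by
      by_contra hnot
      have hperp : ∀ w ∈ G, ⟪w, u⟫_ℂ = 0 := by
        intro w hw
        have hw' : w ∈ Submodule.span ℂ
            {u | ∃ μ ∈ Set.Icc a b, IsGalerkinEigenpair A (L n) μ u} := hw
        clear hw
        induction hw' using Submodule.span_induction with
        | mem w hwgen =>
          obtain ⟨ν, hν, hwL, hw0, hweq⟩ := hwgen
          have h1 : ⟪A u, w⟫_ℂ = (μ : ℂ) * ⟪u, w⟫_ℂ :=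
            hueq w (Submodule.subset_span ⟨ν, hν, hwL, hw0, hweq⟩)
          have h2 : ⟪A u, w⟫_ℂ = (ν : ℂ) * ⟪u, w⟫_ℂ := by
            rw [sa_inner A hA, ← inner_conj_symm, hweq u huL, map_mul, Complex.conj_ofReal,
              inner_conj_symm]
          have hμν : (μ : ℂ) ≠ (ν : ℂ) := by
            intro hc
            have hμν' : μ = ν := by exact_mod_cast hc
            exact hnot (by rw [hμν']; exact hν)
          have h3 := h1.symm.trans h2
          have h4 : ⟪u, w⟫_ℂ = 0 := by
            by_contra h0
            exact hμν (mul_right_cancel₀ h0 h3)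
          rw [← inner_conj_symm, h4, map_zero]
        | zero => exact inner_zero_left u
        | add x y hx hy ihx ihy => rw [inner_add_left, ihx, ihy, add_zero]
        | smul c x hx ih => rw [inner_smul_left, ih, mul_zero]
      have h := hperp u huG
      rw [inner_self_eq_zero] at h
      exact hu0 h
    exact ⟨⟨u, huL, hu0, heqL⟩, hμΔ⟩
  · rintro ⟨⟨u, huL, hu0, hueq⟩, hμΔ⟩
    exact ⟨u, Submodule.subset_span ⟨μ, hμΔ, huL, hu0, hueq⟩, hu0,
      fun v hv => hueq v (hGL hv)⟩

end
end

section
/- (Lemma 2.2, bounded version.) Let H be a nontrivial complex Hilbert space, A : H → H a bounded self-adjoint operator, m := min σ(A), B := A − (m−1)·I (so that ⟨Bu, u⟩ ≥ ‖u‖² for all u), and S the positive square root of B given by the continuous functional calculus (S is positive, self-adjoint and invertible). Let (L_n) be a sequence of finite-dimensional subspaces of H such that for every u ∈ H there exist u_n ∈ L_n with ‖S(u_n − u)‖ → 0. Let P̃_n be the orthogonal projection of H onto the image S(L_n). Then for every u ∈ H, ‖P̃_n u − u‖ → 0 as n → ∞. -/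
open Filter Metric
open scoped InnerProductSpace

noncomputable section

lemma proj_norm_le_s4 {H : Type*} [NormedAddCommGroup H] [InnerProductSpace ℂ H]
    [CompleteSpace H] (P : H →L[ℂ] H) (hP : IsIdempotentElem P) (hsa : IsSelfAdjoint P)
    (x : H) : ‖P x‖ ≤ ‖x‖ := by
  have hadj : ContinuousLinearMap.adjoint P = P :=
    (ContinuousLinearMap.isSelfAdjoint_iff'.mp hsa)
  have h1 : (‖P x‖ : ℝ) ^ 2 = RCLike.re (⟪P x, P x⟫_ℂ) := by
    rw [inner_self_eq_norm_sq]
  have h2 : ⟪P x, P x⟫_ℂ = ⟪x, P x⟫_ℂ := by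
    calc ⟪P x, P x⟫_ℂ = ⟪ContinuousLinearMap.adjoint P x, P x⟫_ℂ := by rw [hadj]
    _ = ⟪x, P (P x)⟫_ℂ := by rw [ContinuousLinearMap.adjoint_inner_left]
    _ = ⟪x, P x⟫_ℂ := by
        congr 1
        have := congrArg (fun T : H →L[ℂ] H => T x) hP
        simpa [ContinuousLinearMap.mul_apply] using this
  have h3 : RCLike.re (⟪x, P x⟫_ℂ) ≤ ‖x‖ * ‖P x‖ := by
    calc RCLike.re (⟪x, P x⟫_ℂ) ≤ ‖⟪x, P x⟫_ℂ‖ := RCLike.re_le_norm _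
    _ ≤ ‖x‖ * ‖P x‖ := norm_inner_le_norm _ _
  have h4 : ‖P x‖ ^ 2 ≤ ‖x‖ * ‖P x‖ := by rw [h1, h2]; exact h3
  rcases eq_or_lt_of_le (norm_nonneg (P x)) with h | h
  · simp [← h, norm_nonneg]
  · nlinarith [h4]

theorem stmt4
    {H : Type*} [NormedAddCommGroup H] [InnerProductSpace ℂ H] [CompleteSpace H]
    [Nontrivial H]
    (A : H →L[ℂ] H) (hA : IsSelfAdjoint A)
    -- `m := min σ(A)`
    (m : ℝ) (hm : m = sInf (spectrum ℝ A))
    -- `B := A − (m−1)·I`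
    (B : H →L[ℂ] H) (hB : B = A - (m - 1 : ℂ) • (1 : H →L[ℂ] H))
    -- `S` is the positive square root of `B` given by the continuous functional calculus
    (S : H →L[ℂ] H) (hS : S = cfc Real.sqrt B)
    -- the trial spaces
    (L : ℕ → Submodule ℂ H) [∀ n, FiniteDimensional ℂ (L n)]
    (hL : ∀ u : H, ∃ un : ℕ → H, (∀ n, un n ∈ L n) ∧
      Tendsto (fun n => ‖S (un n - u)‖) atTop (nhds 0))
    -- `P̃ₙ` is the orthogonal projection of `H` onto `S(Lₙ)`
    (Pt : ℕ → (H →L[ℂ] H))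
    (hPt : ∀ n, IsIdempotentElem (Pt n) ∧ IsSelfAdjoint (Pt n) ∧
      LinearMap.range (Pt n : H →ₗ[ℂ] H) = (L n).map (S : H →ₗ[ℂ] H)) :
    ∀ u : H, Tendsto (fun n => ‖Pt n u - u‖) atTop (nhds 0) := by
  -- B is self-adjoint
  have hBsa : IsSelfAdjoint B := by
    rw [hB]
    refine hA.sub ?_
    rw [IsSelfAdjoint, star_smul, star_one]
    congr 1
    simp [Complex.ext_iff]
  -- B = A - algebraMap ℝ _ (m - 1)
  have hBalg : B = A - algebraMap ℝ (H →L[ℂ] H) (m - 1) := by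
    rw [hB]
    congr 1
    rw [Algebra.algebraMap_eq_smul_one]
    norm_num [← Complex.coe_smul]
  -- spectrum of B lies in [1, ∞)
  have hspecB : ∀ x ∈ spectrum ℝ B, 1 ≤ x := by
    intro x hx
    rw [hBalg, ← spectrum.sub_singleton_eq] at hx
    obtain ⟨y, hy, z, hz, rfl⟩ := hx
    simp only [Set.mem_singleton_iff] at hz
    subst hz
    show (1:ℝ) ≤ y - (m - 1)
    have hbdd : BddBelow (spectrum ℝ A) := (spectrum.isCompact A).bddBelow
    have : m ≤ y := hm ▸ csInf_le hbdd hy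
    linarith
  -- S is a unit
  have hSu : IsUnit S := by
    rw [hS]
    refine (isUnit_cfc_iff Real.sqrt B).mpr (fun x hx => ?_)
    have := hspecB x hx
    positivity
  -- S is surjective
  intro u
  obtain ⟨w, hw⟩ : ∃ w, S w = u := by
    refine ⟨((hSu.unit⁻¹ : (H →L[ℂ] H)ˣ) : H →L[ℂ] H) u, ?_⟩
    have h1 : S * ((hSu.unit⁻¹ : (H →L[ℂ] H)ˣ) : H →L[ℂ] H) = 1 := by
      exact hSu.mul_val_inv
    have := congrArg (fun T : H →L[ℂ] H => T u) h1
    simp only [ContinuousLinearMap.mul_apply, ContinuousLinearMap.one_apply] at this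
    exact this
  obtain ⟨un, hun, hconv⟩ := hL w
  -- key estimate
  have hest : ∀ n, ‖Pt n u - u‖ ≤ 2 * ‖S (un n - w)‖ := by
    intro n
    obtain ⟨hid, hsa, hrange⟩ := hPt n
    have hmem : S (un n) ∈ LinearMap.range (Pt n : H →ₗ[ℂ] H) := by
      rw [hrange]
      exact ⟨un n, hun n, rfl⟩
    have hfix : Pt n (S (un n)) = S (un n) := by
      obtain ⟨y, hy⟩ := hmem
      have := congrArg (fun T : H →L[ℂ] H => T y) hid
      simp only [ContinuousLinearMap.mul_apply] at this
      rw [← hy, ContinuousLinearMap.coe_coe, this]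
    have hSd : S (un n) - u = S (un n - w) := by rw [map_sub, hw]
    calc ‖Pt n u - u‖ = ‖Pt n (u - S (un n)) + (S (un n) - u)‖ := by
          rw [map_sub, hfix]; congr 1; abel
    _ ≤ ‖Pt n (u - S (un n))‖ + ‖S (un n) - u‖ := norm_add_le _ _
    _ ≤ ‖u - S (un n)‖ + ‖S (un n) - u‖ := by
          gcongr; exact proj_norm_le_s4 _ hid hsa _
    _ = 2 * ‖S (un n - w)‖ := by rw [norm_sub_rev, ← hSd]; ring
  have h2 : Tendsto (fun n => 2 * ‖S (un n - w)‖) atTop (nhds 0) := by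
    simpa using hconv.const_mul 2
  exact squeeze_zero (fun n => norm_nonneg _) hest h2

end
end

section
/- (Lemma 3.3, bounded case.) Under the Galerkin setup, spectral pollution occurs in Δ, i.e. δ(L_n(Δ), L(Δ)) does not converge to 0 as n → ∞, if and only if there exists a strictly increasing sequence of indices (n_j) such that dim L_{n_j}(Δ) > dim L(Δ) = d for every j. -/
open Filter Metric
open scoped InnerProductSpace

noncomputable section

variable {H : Type*} [NormedAddCommGroup H] [InnerProductSpace ℂ H] [CompleteSpace H]

open Polynomial

omit [CompleteSpace H] in
lemma norm_sub_orthProj_le (K : Submodule ℂ H) [K.HasOrthogonalProjection] (u v : H)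
    (hv : v ∈ K) : ‖u - Submodule.orthogonalProjectionOnto K u‖ ≤ ‖u - v‖ := by
  rw [← Submodule.starProjection_apply, Submodule.starProjection_minimal]
  exact ciInf_le ⟨0, by rintro x ⟨w, rfl⟩; positivity⟩ (⟨v, hv⟩ : K)

omit [CompleteSpace H] in
lemma infDist_eq_norm_sub_orthProj (K : Submodule ℂ H) [K.HasOrthogonalProjection] (u : H) :
    Metric.infDist u (K : Set H) = ‖u - Submodule.orthogonalProjectionOnto K u‖ := by
  refine le_antisymm ?_ ?_
  · have := Metric.infDist_le_dist_of_mem (x := u) (y := (Submodule.orthogonalProjectionOnto K u : H))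
      (Submodule.orthogonalProjectionOnto K u).2
    rwa [dist_eq_norm] at this
  · by_contra hcon
    push_neg at hcon
    obtain ⟨y, hy, hlt⟩ := (Metric.infDist_lt_iff ⟨0, K.zero_mem⟩).mp hcon
    rw [dist_eq_norm] at hlt
    exact absurd hlt (not_lt.mpr (norm_sub_orthProj_le K u y hy))

lemma pow_apply_eigenvector (A : H →L[ℂ] H) (lam : ℝ) (u : H) (hu : A u = (lam : ℂ) • u)
    (n : ℕ) : (A ^ n) u = ((lam ^ n : ℝ) : ℂ) • u := by
  induction n with
  | zero => simp
  | succ n ih =>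
    rw [pow_succ', ContinuousLinearMap.mul_apply, ih, map_smul, hu, smul_smul]
    push_cast
    ring_nf

lemma aeval_apply_eigenvector (A : H →L[ℂ] H) (lam : ℝ) (u : H) (hu : A u = (lam : ℂ) • u)
    (q : ℝ[X]) : (aeval A q) u = ((q.eval lam : ℝ) : ℂ) • u := by
  induction q using Polynomial.induction_on with
  | C r =>
    simp only [aeval_C, eval_C]
    rw [Algebra.algebraMap_eq_smul_one]
    simp [ContinuousLinearMap.smul_apply, Complex.coe_smul]
  | add p q hp hq =>
    simp only [map_add, ContinuousLinearMap.add_apply, hp, hq, eval_add]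
    push_cast
    rw [add_smul]
  | monomial n r _ =>
    simp only [map_mul, aeval_C, map_pow, aeval_X, eval_mul, eval_C, eval_pow, eval_X]
    rw [ContinuousLinearMap.mul_apply, pow_apply_eigenvector A lam u hu]
    rw [Algebra.algebraMap_eq_smul_one]
    simp only [map_smul, ContinuousLinearMap.smul_apply, ContinuousLinearMap.one_apply]
    rw [smul_comm]
    push_cast
    rw [← smul_smul, Complex.coe_smul]

lemma cfc_apply_eigenvector (A : H →L[ℂ] H) (hA : IsSelfAdjoint A)
    {f : ℝ → ℝ} (hf : ContinuousOn f (spectrum ℝ A)) {lam : ℝ} (hlam : lam ∈ spectrum ℝ A)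
    {u : H} (hu : A u = (lam : ℂ) • u) : cfc f A u = ((f lam : ℝ) : ℂ) • u := by
  have hcomp : IsCompact (spectrum ℝ A) := ContinuousFunctionalCalculus.isCompact_spectrum A
  haveI : CompactSpace (spectrum ℝ A) := isCompact_iff_compactSpace.mp hcomp
  have key : ∀ ε > (0:ℝ), ‖cfc f A u - ((f lam : ℝ) : ℂ) • u‖ ≤ 2 * ε * ‖u‖ := by
    intro ε hε
    -- polynomial approximation
    set s := spectrum ℝ A with hs
    let g : C(s, ℝ) := ⟨s.restrict f, (continuousOn_iff_continuous_restrict.mp hf)⟩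
    have hcl : g ∈ (polynomialFunctions s).topologicalClosure := by
      rw [polynomialFunctions.topologicalClosure s]; trivial
    rw [← SetLike.mem_coe, Subalgebra.topologicalClosure_coe,
      Metric.mem_closure_iff] at hcl
    obtain ⟨h, hh, hdist⟩ := hcl ε hε
    rw [polynomialFunctions_coe] at hh
    obtain ⟨q, rfl⟩ := hh
    have hq : ∀ x ∈ s, ‖f x - q.eval x‖ ≤ ε := by
      intro x hx
      have := ContinuousMap.dist_apply_le_dist (f := g) (g := q.toContinuousMapOnAlgHom s) ⟨x, hx⟩
      rw [dist_eq_norm] at this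
      exact le_trans (le_of_eq rfl) (this.trans hdist.le)
    -- operator bound
    have hnorm : ‖cfc f A - aeval A q‖ ≤ ε := by
      have h1 : cfc f A - aeval A q = cfc (fun x => f x - q.eval x) A := by
        rw [cfc_sub f q.eval A hf q.continuous.continuousOn]
        rw [cfc_polynomial q A]
      rw [h1]
      exact norm_cfc_le hε.le hq
    have hid : cfc f A u - ((f lam : ℝ) : ℂ) • u
        = (cfc f A - aeval A q) u + (((q.eval lam : ℝ) : ℂ) - ((f lam : ℝ) : ℂ)) • u := by
      rw [ContinuousLinearMap.sub_apply, aeval_apply_eigenvector A lam u hu q, sub_smul]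
      abel
    calc ‖cfc f A u - ((f lam : ℝ) : ℂ) • u‖
        = ‖(cfc f A - aeval A q) u + (((q.eval lam : ℝ) : ℂ) - ((f lam : ℝ) : ℂ)) • u‖ := by
          rw [hid]
      _ ≤ ‖(cfc f A - aeval A q) u‖ + ‖(((q.eval lam : ℝ) : ℂ) - ((f lam : ℝ) : ℂ)) • u‖ :=
          norm_add_le _ _
      _ ≤ ε * ‖u‖ + ε * ‖u‖ := by
          gcongr
          · exact (ContinuousLinearMap.le_opNorm _ _).trans
              (mul_le_mul_of_nonneg_right hnorm (norm_nonneg u))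
          · rw [norm_smul]
            gcongr
            have : ‖((q.eval lam : ℝ) : ℂ) - ((f lam : ℝ) : ℂ)‖ = |q.eval lam - f lam| := by
              push_cast
              rw [← Complex.ofReal_sub, Complex.norm_real]; rfl
            rw [this, abs_sub_comm]
            exact hq lam hlam
      _ = 2 * ε * ‖u‖ := by ring
  by_contra hne
  have hpos : 0 < ‖cfc f A u - ((f lam : ℝ) : ℂ) • u‖ := by
    rw [norm_pos_iff]; exact sub_ne_zero.mpr hne
  rcases eq_or_ne u 0 with rfl | hu0
  · simp at hpos
  · have hupos : 0 < ‖u‖ := norm_pos_iff.mpr hu0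
    have := key (‖cfc f A u - ((f lam : ℝ) : ℂ) • u‖ / (4 * ‖u‖)) (by positivity)
    have h4 : 2 * (‖cfc f A u - ((f lam : ℝ) : ℂ) • u‖ / (4 * ‖u‖)) * ‖u‖
        = ‖cfc f A u - ((f lam : ℝ) : ℂ) • u‖ / 2 := by
      field_simp
      ring
    rw [h4] at this
    linarith

lemma E_idem (A : H →L[ℂ] H) (a b : ℝ) (f : ℝ → ℝ) (hf : ContinuousOn f (spectrum ℝ A))
    (hf1 : ∀ x ∈ spectrum ℝ A ∩ Set.Icc a b, f x = 1)
    (hf0 : ∀ x ∈ spectrum ℝ A \ Set.Icc a b, f x = 0)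
    (E : H →L[ℂ] H) (hE : E = cfc f A) : E * E = E := by
  rw [hE, ← cfc_mul f f A hf hf]
  apply cfc_congr
  intro x hx
  show f x * f x = f x
  by_cases hx' : x ∈ Set.Icc a b
  · rw [hf1 x ⟨hx, hx'⟩]; norm_num
  · rw [hf0 x ⟨hx, hx'⟩]; norm_num

lemma E_comm (A : H →L[ℂ] H) (hA : IsSelfAdjoint A) (f : ℝ → ℝ)
    (hf : ContinuousOn f (spectrum ℝ A))
    (E : H →L[ℂ] H) (hE : E = cfc f A) : A * E = E * A := by
  have hidA : cfc (id : ℝ → ℝ) A = A := cfc_id ℝ A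
  rw [hE]
  calc A * cfc f A = cfc (id : ℝ → ℝ) A * cfc f A := by rw [hidA]
    _ = cfc (fun x => id x * f x) A := (cfc_mul _ f A continuousOn_id hf).symm
    _ = cfc (fun x => f x * id x) A := cfc_congr fun x _ => mul_comm _ _
    _ = cfc f A * cfc (id : ℝ → ℝ) A := cfc_mul f _ A hf continuousOn_id
    _ = cfc f A * A := by rw [hidA]

lemma E_fix (A : H →L[ℂ] H) (a b : ℝ) (f : ℝ → ℝ) (hf : ContinuousOn f (spectrum ℝ A))
    (hf1 : ∀ x ∈ spectrum ℝ A ∩ Set.Icc a b, f x = 1)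
    (hf0 : ∀ x ∈ spectrum ℝ A \ Set.Icc a b, f x = 0)
    (E : H →L[ℂ] H) (hE : E = cfc f A) : ∀ u ∈ LinearMap.range (E : H →ₗ[ℂ] H), E u = u := by
  intro u hu
  obtain ⟨w, rfl⟩ := hu
  have h2 : E ((E : H →ₗ[ℂ] H) w) = (E * E) w := rfl
  rw [h2, E_idem A a b f hf hf1 hf0 E hE]
  rfl

lemma E_invariant (A : H →L[ℂ] H) (hA : IsSelfAdjoint A) (a b : ℝ) (f : ℝ → ℝ)
    (hf : ContinuousOn f (spectrum ℝ A))
    (hf1 : ∀ x ∈ spectrum ℝ A ∩ Set.Icc a b, f x = 1)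
    (hf0 : ∀ x ∈ spectrum ℝ A \ Set.Icc a b, f x = 0)
    (E : H →L[ℂ] H) (hE : E = cfc f A) :
    ∀ u ∈ LinearMap.range (E : H →ₗ[ℂ] H), A u ∈ LinearMap.range (E : H →ₗ[ℂ] H) := by
  intro u hu
  rw [← E_fix A a b f hf hf1 hf0 E hE u hu]
  refine ⟨A u, ?_⟩
  have : (E * A) u = (A * E) u := by rw [E_comm A hA f hf E hE]
  exact this

lemma eig_mem_Ioo (A : H →L[ℂ] H) (hA : IsSelfAdjoint A) (a b : ℝ)
    (ha : a ∉ spectrum ℝ A) (hb : b ∉ spectrum ℝ A) (f : ℝ → ℝ)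
    (hf : ContinuousOn f (spectrum ℝ A))
    (hf1 : ∀ x ∈ spectrum ℝ A ∩ Set.Icc a b, f x = 1)
    (hf0 : ∀ x ∈ spectrum ℝ A \ Set.Icc a b, f x = 0)
    (E : H →L[ℂ] H) (hE : E = cfc f A)
    {lam : ℝ} {u : H} (hu : u ∈ LinearMap.range (E : H →ₗ[ℂ] H)) (hu0 : u ≠ 0)
    (huA : A u = (lam : ℂ) • u) : lam ∈ spectrum ℝ A ∧ lam ∈ Set.Ioo a b := by
  have hspec : lam ∈ spectrum ℝ A := by
    rw [spectrum.mem_iff]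
    intro hunit
    apply hu0
    have h0 : (algebraMap ℝ (H →L[ℂ] H) lam - A) u = 0 := by
      simp only [ContinuousLinearMap.sub_apply, Algebra.algebraMap_eq_smul_one,
        ContinuousLinearMap.smul_apply, ContinuousLinearMap.one_apply, huA]
      rw [Complex.coe_smul]
      abel
    calc u = (1 : H →L[ℂ] H) u := rfl
      _ = (↑hunit.unit⁻¹ * (algebraMap ℝ (H →L[ℂ] H) lam - A)) u := by
            rw [IsUnit.val_inv_mul]
      _ = (↑hunit.unit⁻¹ : H →L[ℂ] H) ((algebraMap ℝ (H →L[ℂ] H) lam - A) u) := rfl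
      _ = 0 := by rw [h0]; simp
  have hflam : f lam = 1 := by
    have h1 : E u = ((f lam : ℝ) : ℂ) • u := by
      rw [hE]; exact cfc_apply_eigenvector A hA hf hspec huA
    have h2 : E u = u := E_fix A a b f hf hf1 hf0 E hE u hu
    rw [h2] at h1
    by_contra hne
    have hz : (((f lam : ℝ) : ℂ) - 1) • u = 0 := by rw [sub_smul, ← h1, one_smul, sub_self]
    rcases smul_eq_zero.mp hz with h | h
    · exact hne (by exact_mod_cast sub_eq_zero.mp h)
    · exact hu0 h
  have hicc : lam ∈ Set.Icc a b := by
    by_contra hni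
    have := hf0 lam ⟨hspec, hni⟩
    rw [this] at hflam; norm_num at hflam
  refine ⟨hspec, lt_of_le_of_ne hicc.1 ?_, lt_of_le_of_ne hicc.2 ?_⟩
  · intro h; exact ha (h ▸ hspec)
  · intro h; exact hb (h.symm ▸ hspec)

omit [CompleteSpace H] in
set_option maxHeartbeats 1000000 in
lemma euclid_norm_le {m : ℕ} (r : ℝ) (hr : 0 ≤ r) (x y : EuclideanSpace ℂ (Fin m))
    (h : ∀ i, r * ‖y i‖ ≤ ‖x i‖) : r * ‖y‖ ≤ ‖x‖ := by
  rw [EuclideanSpace.norm_eq, EuclideanSpace.norm_eq]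
  have hs : (0:ℝ) ≤ ∑ i, ‖y i‖ ^ 2 := by positivity
  have h2 : (r * Real.sqrt (∑ i, ‖y i‖ ^ 2)) ^ 2 ≤ ∑ i, ‖x i‖ ^ 2 := by
    rw [mul_pow, Real.sq_sqrt hs, Finset.mul_sum]
    refine Finset.sum_le_sum fun i _ => ?_
    have := h i
    calc r ^ 2 * ‖y i‖ ^ 2 = (r * ‖y i‖) ^ 2 := by ring
      _ ≤ ‖x i‖ ^ 2 := by
          apply pow_le_pow_left₀ (by positivity) this
  have h3 := Real.sqrt_le_sqrt h2
  rwa [Real.sqrt_sq (by positivity)] at h3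

/-- The compression of `A` to a closed subspace `K`, as a linear map on `K`. -/
def compressK (A : H →L[ℂ] H) (K : Submodule ℂ H) [K.HasOrthogonalProjection] : K →ₗ[ℂ] K :=
  (Submodule.orthogonalProjectionOnto K).toLinearMap.comp ((A : H →ₗ[ℂ] H).domRestrict K)

lemma compressK_apply (A : H →L[ℂ] H) (K : Submodule ℂ H) [K.HasOrthogonalProjection] (x : K) :
    compressK A K x = Submodule.orthogonalProjectionOnto K (A x) := rfl

lemma compressK_symmetric (A : H →L[ℂ] H) (hA : IsSelfAdjoint A) (K : Submodule ℂ H)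
    [K.HasOrthogonalProjection] : (compressK A K).IsSymmetric := by
  have hsym := ContinuousLinearMap.isSelfAdjoint_iff_isSymmetric.mp hA
  intro x y
  rw [compressK_apply, compressK_apply]
  rw [Submodule.inner_orthogonalProjection_eq_of_mem_right (𝕜 := ℂ) (E := H) (K := K) y (A (x:H))]
  rw [Submodule.inner_orthogonalProjection_eq_of_mem_left (𝕜 := ℂ) (E := H) (K := K) x (A (y:H))]
  exact hsym (x : H) (y : H)

set_option maxHeartbeats 1000000 in
lemma approx_eig (A : H →L[ℂ] H) (hA : IsSelfAdjoint A) (a b : ℝ)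
    {lam : ℝ} (hlam : lam ∈ Set.Ioo a b) {u : H} (huA : A u = (lam : ℂ) • u)
    (K : Submodule ℂ H) [FiniteDimensional ℂ K] {ε' : ℝ} (hε' : 0 < ε')
    (hn : ‖u - Submodule.orthogonalProjectionOnto K u‖ ≤ ε') :
    Metric.infDist u ((galerkinSubspace A K a b : Set H))
      ≤ ε' + (‖A‖ + |lam|) * ε' / min (lam - a) (b - lam) := by
  set δ0 := min (lam - a) (b - lam) with hδ0def
  have hδ0 : 0 < δ0 := lt_min (by linarith [hlam.1]) (by linarith [hlam.2])
  set C := ‖A‖ + |lam| with hCdef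
  have hC : 0 ≤ C := by positivity
  set vK : K := Submodule.orthogonalProjectionOnto K u with hvK
  have hT := compressK_symmetric A hA K
  set B := hT.eigenvectorBasis (rfl : Module.finrank ℂ K = Module.finrank ℂ K) with hB
  set μ := hT.eigenvalues (rfl : Module.finrank ℂ K = Module.finrank ℂ K) with hμ
  set c := B.repr vK with hc
  set w' : EuclideanSpace ℂ (Fin (Module.finrank ℂ K)) :=
    WithLp.toLp 2 (fun i => if μ i ∈ Set.Icc a b then c i else 0) with hw'
  set w : K := B.repr.symm w' with hw
  have hwi_pos : ∀ i, μ i ∈ Set.Icc a b → w' i = c i := by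
    intro i hi; rw [hw']; exact if_pos hi
  have hwi_neg : ∀ i, μ i ∉ Set.Icc a b → w' i = 0 := by
    intro i hi; rw [hw']; exact if_neg hi
  -- w belongs to the Galerkin subspace
  have hwmem : (w : H) ∈ galerkinSubspace A K a b := by
    have hsum : (w : K) = ∑ i, w' i • B i := (B.sum_repr_symm w').symm
    have hsum' : (w : H) = ∑ i, w' i • (B i : H) := by
      rw [hsum]; push_cast; rfl
    rw [hsum']
    refine Submodule.sum_mem _ fun i _ => ?_
    by_cases hi : μ i ∈ Set.Icc a b
    · refine Submodule.smul_mem _ _ (Submodule.subset_span ⟨μ i, hi, ?_, ?_, ?_⟩)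
      · exact (B i).2
      · intro h0
        have h1 : ‖(B i : H)‖ = 1 := by
          rw [show ‖(B i : H)‖ = ‖B i‖ from rfl]
          exact B.orthonormal.1 i
        rw [h0] at h1; simp at h1
      · intro v hv
        have h1 : ⟪Submodule.orthogonalProjectionOnto K (A (B i : H)), (⟨v, hv⟩ : K)⟫_ℂ
            = ⟪A (B i : H), v⟫_ℂ :=
          Submodule.inner_orthogonalProjection_eq_of_mem_right (𝕜 := ℂ) (E := H) (K := K) ⟨v, hv⟩ _
        have h2 : Submodule.orthogonalProjectionOnto K (A (B i : H)) = (μ i : ℂ) • B i := by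
          rw [← compressK_apply]
          have h3 := hT.apply_eigenvectorBasis (rfl : Module.finrank ℂ K = Module.finrank ℂ K) i
          rw [← hB, ← hμ] at h3
          exact h3
        rw [h2] at h1
        rw [← h1, inner_smul_left, Submodule.coe_inner]
        simp [Complex.conj_ofReal]
    · rw [hwi_neg i hi, zero_smul]
      exact Submodule.zero_mem _
  -- component-wise representation of the residual
  have hrepr : ∀ i, B.repr (compressK A K vK - (lam : ℂ) • vK) i = ((μ i : ℂ) - lam) * c i := by
    intro i
    rw [map_sub, map_smul]
    have h3 := hT.eigenvectorBasis_apply_self_apply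
      (rfl : Module.finrank ℂ K = Module.finrank ℂ K) vK i
    rw [← hB, ← hμ] at h3
    show B.repr (compressK A K vK) i - ((lam : ℂ) • B.repr vK) i = ((μ i : ℂ) - lam) * c i
    rw [h3, ← hc]
    show (μ i : ℂ) * c i - (lam : ℂ) * c i = _
    ring
  have hest1 : δ0 * ‖vK - w‖ ≤ ‖compressK A K vK - (lam : ℂ) • vK‖ := by
    rw [← B.repr.norm_map (vK - w), ← B.repr.norm_map (compressK A K vK - (lam : ℂ) • vK)]
    apply euclid_norm_le δ0 hδ0.le
    intro i
    have hyi : (B.repr (vK - w)) i = c i - w' i := by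
      rw [map_sub]
      show c i - (B.repr (B.repr.symm w')) i = c i - w' i
      rw [LinearIsometryEquiv.apply_symm_apply]
    rw [hrepr i]
    show δ0 * ‖(B.repr (vK - w)) i‖ ≤ _
    rw [hyi]
    by_cases hi : μ i ∈ Set.Icc a b
    · rw [hwi_pos i hi, sub_self, norm_zero, mul_zero]
      positivity
    · rw [hwi_neg i hi, sub_zero]
      have hi' := hi
      rw [Set.mem_Icc, not_and_or] at hi'
      have habs : δ0 ≤ |μ i - lam| := by
        rcases hi' with h | h
        · push_neg at h
          rw [abs_sub_comm, abs_of_pos (by linarith [hlam.1])]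
          calc δ0 ≤ lam - a := min_le_left _ _
            _ ≤ lam - μ i := by linarith
        · push_neg at h
          rw [abs_of_pos (by linarith [hlam.2])]
          calc δ0 ≤ b - lam := min_le_right _ _
            _ ≤ μ i - lam := by linarith
      have hnx : ‖((μ i : ℂ) - lam) * c i‖ = |μ i - lam| * ‖c i‖ := by
        rw [norm_mul]
        congr 1
        rw [show ((μ i : ℂ) - (lam : ℂ)) = ((μ i - lam : ℝ) : ℂ) by push_cast; ring]
        exact Complex.norm_real _
      rw [hnx]
      exact mul_le_mul_of_nonneg_right habs (norm_nonneg _)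
  -- estimate on the residual
  have hest2 : ‖compressK A K vK - (lam : ℂ) • vK‖ ≤ C * ε' := by
    have hPfix : ((lam : ℂ) • vK) = Submodule.orthogonalProjectionOnto K ((lam : ℂ) • (vK : H)) := by
      rw [map_smul, Submodule.orthogonalProjection_mem_subspace_eq_self]
    have hdiff : compressK A K vK - (lam : ℂ) • vK
        = Submodule.orthogonalProjectionOnto K (A (vK : H) - (lam : ℂ) • (vK : H)) := by
      rw [compressK_apply, hPfix, ← map_sub]
    rw [hdiff]
    have hP : ‖Submodule.orthogonalProjectionOnto K (A (vK : H) - (lam : ℂ) • (vK : H))‖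
        ≤ ‖A (vK : H) - (lam : ℂ) • (vK : H)‖ := by
      calc ‖Submodule.orthogonalProjectionOnto K (A (vK : H) - (lam : ℂ) • (vK : H))‖
          ≤ ‖Submodule.orthogonalProjectionOnto K‖ * ‖A (vK : H) - (lam : ℂ) • (vK : H)‖ :=
            (Submodule.orthogonalProjectionOnto K).le_opNorm _
        _ ≤ 1 * ‖A (vK : H) - (lam : ℂ) • (vK : H)‖ :=
            mul_le_mul_of_nonneg_right (Submodule.orthogonalProjection_norm_le K) (norm_nonneg _)
        _ = _ := one_mul _
    refine hP.trans ?_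
    have hsplit : A (vK : H) - (lam : ℂ) • (vK : H)
        = A ((vK : H) - u) - (lam : ℂ) • ((vK : H) - u) := by
      rw [map_sub, smul_sub, huA]
      abel
    rw [hsplit]
    calc ‖A ((vK : H) - u) - (lam : ℂ) • ((vK : H) - u)‖
        ≤ ‖A ((vK : H) - u)‖ + ‖(lam : ℂ) • ((vK : H) - u)‖ := norm_sub_le _ _
      _ ≤ ‖A‖ * ‖(vK : H) - u‖ + |lam| * ‖(vK : H) - u‖ := by
          refine add_le_add (A.le_opNorm _) ?_
          rw [norm_smul]
          apply mul_le_mul_of_nonneg_right _ (norm_nonneg _)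
          rw [Complex.norm_real, Real.norm_eq_abs]
      _ = C * ‖(vK : H) - u‖ := by ring
      _ ≤ C * ε' := by
          apply mul_le_mul_of_nonneg_left _ hC
          rw [norm_sub_rev]
          exact hn
  -- conclude
  have hfin : ‖(vK : H) - (w : H)‖ ≤ C * ε' / δ0 := by
    have h2 : ‖vK - w‖ ≤ C * ε' / δ0 := by
      rw [le_div_iff₀ hδ0, mul_comm]
      exact hest1.trans hest2
    have h1 : ‖(vK : H) - (w : H)‖ = ‖vK - w‖ := by
      rw [show (vK : H) - (w : H) = ((vK - w : K) : H) by push_cast; ring,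
        Submodule.norm_coe]
    exact h1 ▸ h2
  have hdistw : Metric.infDist u ((galerkinSubspace A K a b : Set H)) ≤ ‖u - (w : H)‖ := by
    have h3 := Metric.infDist_le_dist_of_mem (x := u) hwmem
    rwa [dist_eq_norm] at h3
  refine hdistw.trans ?_
  calc ‖u - (w : H)‖ ≤ ‖u - (vK : H)‖ + ‖(vK : H) - (w : H)‖ :=
        norm_sub_le_norm_sub_add_norm_sub _ _ _
    _ ≤ ε' + C * ε' / δ0 := add_le_add hn hfin

set_option maxHeartbeats 1000000 in
lemma delta_lemma (V M : Submodule ℂ H) [FiniteDimensional ℂ V] [FiniteDimensional ℂ M]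
    {η : ℝ} (hη0 : 0 ≤ η) (hη : η < 1)
    (hdim : Module.finrank ℂ M ≤ Module.finrank ℂ V)
    (h : ∀ u ∈ V, ‖u‖ = 1 → Metric.infDist u (M : Set H) ≤ η) :
    ∀ v ∈ M, ‖v‖ = 1 → Metric.infDist v (V : Set H) ≤ η / (1 - η) := by
  have hQ : ∀ x : V, ‖(x : H) - Submodule.orthogonalProjectionOnto M (x : H)‖ ≤ η * ‖x‖ := by
    intro x
    rcases eq_or_ne x 0 with rfl | hx0
    · simp
    · have hxn : (0:ℝ) < ‖x‖ := norm_pos_iff.mpr hx0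
      set r : ℂ := (‖x‖ : ℂ) with hr
      have hrn : r ≠ 0 := by
        rw [hr, Ne, Complex.ofReal_eq_zero]
        exact hxn.ne'
      set u : H := r⁻¹ • (x : H) with hu
      have humem : u ∈ V := Submodule.smul_mem _ _ x.2
      have hunorm : ‖u‖ = 1 := by
        rw [hu, norm_smul, norm_inv, hr, Complex.norm_real, Real.norm_eq_abs,
          abs_of_pos hxn, Submodule.norm_coe]
        exact inv_mul_cancel₀ hxn.ne'
      have hid : (x : H) = r • u := by
        rw [hu, smul_smul, mul_inv_cancel₀ hrn, one_smul]
      have h1 := h u humem hunorm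
      rw [infDist_eq_norm_sub_orthProj M u] at h1
      calc ‖(x : H) - Submodule.orthogonalProjectionOnto M (x : H)‖
          = ‖r • u - Submodule.orthogonalProjectionOnto M (r • u)‖ := by rw [← hid]
        _ = ‖r • (u - Submodule.orthogonalProjectionOnto M u)‖ := by
            rw [map_smul, smul_sub]
            norm_num
        _ = ‖x‖ * ‖u - (Submodule.orthogonalProjectionOnto M u : H)‖ := by
            rw [norm_smul, hr, Complex.norm_real, Real.norm_eq_abs, abs_of_pos hxn]
        _ ≤ ‖x‖ * η := by
            apply mul_le_mul_of_nonneg_left _ hxn.le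
            exact h1
        _ = η * ‖x‖ := mul_comm _ _
  set q : V →ₗ[ℂ] M := (Submodule.orthogonalProjectionOnto M).toLinearMap.comp
    ((Submodule.subtype V)) with hq
  have hqapp : ∀ x : V, (q x : H) = Submodule.orthogonalProjectionOnto M (x : H) := fun x => rfl
  have hinj : Function.Injective q := by
    rw [← LinearMap.ker_eq_bot, Submodule.eq_bot_iff]
    intro x hx
    rw [LinearMap.mem_ker] at hx
    have h1 : ‖(x : H) - Submodule.orthogonalProjectionOnto M (x : H)‖ = ‖x‖ := by
      have : (Submodule.orthogonalProjectionOnto M (x : H) : H) = 0 := by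
        rw [← hqapp x, hx]; rfl
      rw [this, sub_zero, Submodule.norm_coe]
    have h2 := hQ x
    rw [h1] at h2
    have : (1 - η) * ‖x‖ ≤ 0 := by nlinarith
    have hn0 : ‖x‖ ≤ 0 := by nlinarith
    exact norm_le_zero_iff.mp hn0
  have hsurj : Function.Surjective q := by
    rw [← LinearMap.range_eq_top]
    apply Submodule.eq_top_of_finrank_eq
    refine le_antisymm (Submodule.finrank_le _) ?_
    rw [LinearMap.finrank_range_of_inj hinj]
    exact hdim
  intro v hv hv1
  obtain ⟨x, hx⟩ := hsurj ⟨v, hv⟩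
  have hvx : Submodule.orthogonalProjectionOnto M (x : H) = ⟨v, hv⟩ := hx ▸ rfl
  have hclose : ‖(x : H) - v‖ ≤ η * ‖x‖ := by
    have := hQ x
    rwa [show ((Submodule.orthogonalProjectionOnto M (x : H)) : H) = v by rw [hvx]] at this
  have hxbound : ‖x‖ ≤ 1 / (1 - η) := by
    have h1 : ‖x‖ - η * ‖x‖ ≤ 1 := by
      have h2 : ‖(x : H)‖ - ‖(x : H) - v‖ ≤ ‖v‖ := by
        have := norm_sub_norm_le ((x : H)) ((x : H) - v)
        simpa using this
      rw [hv1] at h2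
      have h3 := hclose
      have h4 : ‖(x : H)‖ = ‖x‖ := Submodule.norm_coe x
      rw [h4] at h2
      linarith
    rw [le_div_iff₀ (by linarith)]
    nlinarith
  have hfinal : ‖v - (x : H)‖ ≤ η / (1 - η) := by
    rw [norm_sub_rev]
    calc ‖(x : H) - v‖ ≤ η * ‖x‖ := hclose
      _ ≤ η * (1 / (1 - η)) := mul_le_mul_of_nonneg_left hxbound hη0
      _ = η / (1 - η) := by ring
  calc Metric.infDist v (V : Set H) ≤ dist v (x : H) := Metric.infDist_le_dist_of_mem x.2
    _ = ‖v - (x : H)‖ := dist_eq_norm _ _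
    _ ≤ η / (1 - η) := hfinal

omit [CompleteSpace H] in
lemma euclid_coord_le {m : ℕ} (x : EuclideanSpace ℂ (Fin m)) (i : Fin m) : ‖x i‖ ≤ ‖x‖ := by
  rw [EuclideanSpace.norm_eq]
  have h1 : ‖x i‖ ^ 2 ≤ ∑ j, ‖x j‖ ^ 2 :=
    Finset.single_le_sum (f := fun j => ‖x j‖ ^ 2) (fun j _ => by positivity)
      (Finset.mem_univ i)
  have := Real.sqrt_le_sqrt h1
  rwa [Real.sqrt_sq (norm_nonneg _)] at this

-- general facts about subDelta
omit [CompleteSpace H] in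
lemma subDelta_nonneg (L M : Submodule ℂ H) : 0 ≤ subDelta L M := by
  rcases Set.eq_empty_or_nonempty ((fun u => Metric.infDist u (M : Set H)) ''
      {u : H | u ∈ L ∧ ‖u‖ = 1}) with he | hne
  · rw [subDelta, he, Real.sSup_empty]
  · obtain ⟨z, hz⟩ := hne
    refine le_csSup_of_le ⟨1, ?_⟩ hz ?_
    · rintro y ⟨v, ⟨hv, hv1⟩, rfl⟩
      calc Metric.infDist v (M : Set H) ≤ dist v 0 := Metric.infDist_le_dist_of_mem M.zero_mem
        _ = ‖v‖ := by rw [dist_eq_norm, sub_zero]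
      
        _ = 1 := hv1
    · obtain ⟨v, ⟨hv, hv1⟩, rfl⟩ := hz
      exact Metric.infDist_nonneg

omit [CompleteSpace H] in
lemma subDelta_le (L M : Submodule ℂ H) {ε : ℝ} (hε : 0 ≤ ε)
    (h : ∀ u ∈ L, ‖u‖ = 1 → Metric.infDist u (M : Set H) ≤ ε) : subDelta L M ≤ ε := by
  apply Real.sSup_le _ hε
  rintro y ⟨v, ⟨hv, hv1⟩, rfl⟩
  exact h v hv hv1

omit [CompleteSpace H] in
lemma le_subDelta (L M : Submodule ℂ H) {u : H} (hu : u ∈ L) (hu1 : ‖u‖ = 1) :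
    Metric.infDist u (M : Set H) ≤ subDelta L M := by
  refine le_csSup ⟨1, ?_⟩ ⟨u, ⟨hu, hu1⟩, rfl⟩
  rintro y ⟨v, ⟨hv, hv1⟩, rfl⟩
  calc Metric.infDist v (M : Set H) ≤ dist v 0 := Metric.infDist_le_dist_of_mem M.zero_mem
    _ = ‖v‖ := by rw [dist_eq_norm, sub_zero]
    _ = 1 := hv1

set_option maxHeartbeats 2000000 in
theorem stmt6
    (A : H →L[ℂ] H) (hA : IsSelfAdjoint A)
    (a b : ℝ) (hab : a < b)
    (ha : a ∉ spectrum ℝ A) (hb : b ∉ spectrum ℝ A)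
    (f : ℝ → ℝ) (hf : ContinuousOn f (spectrum ℝ A))
    (hf1 : ∀ x ∈ spectrum ℝ A ∩ Set.Icc a b, f x = 1)
    (hf0 : ∀ x ∈ spectrum ℝ A \ Set.Icc a b, f x = 0)
    (E : H →L[ℂ] H) (hE : E = cfc f A)
    (d : ℕ) (hd1 : 1 ≤ d)
    [FiniteDimensional ℂ (LinearMap.range (E : H →ₗ[ℂ] H))]
    (hd : Module.finrank ℂ (LinearMap.range (E : H →ₗ[ℂ] H)) = d)
    (L : ℕ → Submodule ℂ H) [∀ n, FiniteDimensional ℂ (L n)]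
    (hL : ∀ u : H, Tendsto (fun n => Metric.infDist u ((L n : Set H))) atTop (nhds 0)) :
    -- spectral pollution occurs in `Δ` iff `dim Lₙⱼ(Δ) > dim L(Δ) = d` along a subsequence
    ¬ Tendsto
        (fun n => subDelta (galerkinSubspace A (L n) a b) (LinearMap.range (E : H →ₗ[ℂ] H)))
        atTop (nhds 0) ↔
      ∃ nj : ℕ → ℕ, StrictMono nj ∧
        ∀ j, d < Module.finrank ℂ (galerkinSubspace A (L (nj j)) a b) := by
  classical
  have hGSle : ∀ n, galerkinSubspace A (L n) a b ≤ L n := by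
    intro n
    apply Submodule.span_le.mpr
    rintro u ⟨μ, hμ, hu⟩
    exact hu.1
  haveI hGSfd : ∀ n, FiniteDimensional ℂ (galerkinSubspace A (L n) a b) :=
    fun n => Submodule.finiteDimensional_of_le (hGSle n)
  constructor
  · -- forward direction, by contraposition
    intro hnotT
    by_contra hnot
    apply hnotT
    have hev : ∀ᶠ n in atTop, Module.finrank ℂ (galerkinSubspace A (L n) a b) ≤ d := by
      by_contra hev'
      rw [Filter.not_eventually] at hev'
      obtain ⟨φ, hφ, hφP⟩ := Filter.extraction_of_frequently_atTop
        (hev'.mono fun n h => lt_of_not_ge h)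
      exact hnot ⟨φ, hφ, hφP⟩
    -- spectral decomposition of V := range E
    have hinv := E_invariant A hA a b f hf hf1 hf0 E hE
    have hsym := ContinuousLinearMap.isSelfAdjoint_iff_isSymmetric.mp hA
    set T : LinearMap.range (E : H →ₗ[ℂ] H) →ₗ[ℂ] LinearMap.range (E : H →ₗ[ℂ] H) :=
      (A : H →ₗ[ℂ] H).restrict hinv with hTdef
    have hTsym : T.IsSymmetric := by
      intro x y
      have h1 : ((T x : LinearMap.range (E : H →ₗ[ℂ] H)) : H) = A (x : H) := rfl
      have h2 : ((T y : LinearMap.range (E : H →ₗ[ℂ] H)) : H) = A (y : H) := rfl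
      rw [Submodule.coe_inner, Submodule.coe_inner, h1, h2]
      exact hsym (x : H) (y : H)
    set BV := hTsym.eigenvectorBasis hd with hBV
    set ν := hTsym.eigenvalues hd with hν
    have heig : ∀ i, A ((BV i : H)) = ((ν i : ℝ) : ℂ) • (BV i : H) := by
      intro i
      have h1 := hTsym.apply_eigenvectorBasis hd i
      rw [← hBV, ← hν] at h1
      calc A (BV i : H) = ((T (BV i) : LinearMap.range (E : H →ₗ[ℂ] H)) : H) := rfl
        _ = (((ν i : ℂ) • BV i : LinearMap.range (E : H →ₗ[ℂ] H)) : H) := by rw [h1]; norm_cast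
        _ = (ν i : ℂ) • (BV i : H) := by
            rw [show ((ν i : ℝ) : ℂ) = (RCLike.ofReal (ν i) : ℂ) from rfl]
            push_cast
            rfl
    have hBV1 : ∀ i, ‖(BV i : H)‖ = 1 := fun i => by
      rw [Submodule.norm_coe]; exact BV.orthonormal.1 i
    have hBV0 : ∀ i, (BV i : H) ≠ 0 := fun i h0 => by
      have h1 := hBV1 i; rw [h0, norm_zero] at h1; norm_num at h1
    have hIoo : ∀ i, ν i ∈ Set.Ioo a b :=
      fun i => (eig_mem_Ioo A hA a b ha hb f hf hf1 hf0 E hE (BV i).2 (hBV0 i) (heig i)).2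
    have hdpos : (0:ℝ) < d := by exact_mod_cast hd1
    -- every unit vector of range E is eventually close to the Galerkin subspaces
    have hVapprox : ∀ η > (0:ℝ), ∀ᶠ n in atTop,
        ∀ x ∈ LinearMap.range (E : H →ₗ[ℂ] H), ‖x‖ = 1 →
          Metric.infDist x ((galerkinSubspace A (L n) a b : Set H)) ≤ η := by
      intro η hη
      have hper : ∀ i : Fin d, ∀ᶠ n in atTop,
          Metric.infDist (BV i : H) ((galerkinSubspace A (L n) a b : Set H))
            ≤ η / (2 * d) := by
        intro i
        set δ0 := min (ν i - a) (b - ν i) with hδ0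
        have hδ0pos : 0 < δ0 :=
          lt_min (by linarith [(hIoo i).1]) (by linarith [(hIoo i).2])
        set C := ‖A‖ + |ν i| with hC
        have hCpos : 0 ≤ C := by positivity
        set D := 1 + C / δ0 with hD
        have hDpos : 0 < D := by positivity
        set ε' := (η / (2 * d)) / D with hε'def
        have hε'pos : 0 < ε' := by positivity
        have hev3 : ∀ᶠ n in atTop,
            Metric.infDist (BV i : H) ((L n : Set H)) < ε' :=
          (hL _).eventually (gt_mem_nhds hε'pos)
        filter_upwards [hev3] with n hn
        have hn' : ‖(BV i : H) - Submodule.orthogonalProjectionOnto (L n) (BV i : H)‖ ≤ ε' := by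
          rw [← infDist_eq_norm_sub_orthProj]; exact hn.le
        have happ := approx_eig A hA a b (hIoo i) (heig i) (L n) hε'pos hn'
        have heq : ε' + C * ε' / δ0 = η / (2 * d) := by
          rw [hε'def, hD]
          field_simp
        calc Metric.infDist (BV i : H) ((galerkinSubspace A (L n) a b : Set H))
            ≤ ε' + C * ε' / δ0 := happ
          _ = η / (2 * d) := heq
      filter_upwards [Filter.eventually_all.2 hper] with n hn x hxV hx1
      have hGSne : ((galerkinSubspace A (L n) a b : Set H)).Nonempty :=
        ⟨0, Submodule.zero_mem _⟩
      have hηd : η / (2 * d) < η / d := by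
        apply div_lt_div_of_pos_left hη hdpos
        linarith
      have hw : ∀ i : Fin d, ∃ w ∈ galerkinSubspace A (L n) a b,
          dist (BV i : H) w < η / d := by
        intro i
        obtain ⟨w, hwmem, hwd⟩ :=
          (Metric.infDist_lt_iff hGSne).mp (lt_of_le_of_lt (hn i) hηd)
        exact ⟨w, hwmem, hwd⟩
      choose wv hwmem hwd using hw
      set av := BV.repr ⟨x, hxV⟩ with hav
      have havn : ‖av‖ = 1 := by
        rw [hav, LinearIsometryEquiv.norm_map]
        rw [show ‖(⟨x, hxV⟩ : LinearMap.range (E : H →ₗ[ℂ] H))‖ = ‖x‖ from rfl, hx1]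
      have hxsum : x = ∑ i, av i • (BV i : H) := by
        have h1 := BV.sum_repr ⟨x, hxV⟩
        calc x = ((⟨x, hxV⟩ : LinearMap.range (E : H →ₗ[ℂ] H)) : H) := rfl
          _ = ((∑ i, av i • BV i : LinearMap.range (E : H →ₗ[ℂ] H)) : H) := by rw [h1]
          _ = ∑ i, av i • (BV i : H) := by push_cast; rfl
      have hsummem : ∑ i, av i • wv i ∈ galerkinSubspace A (L n) a b :=
        Submodule.sum_mem _ fun i _ => Submodule.smul_mem _ _ (hwmem i)
      have hbound : ‖x - ∑ i, av i • wv i‖ ≤ η := by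
        have hsplit : x - ∑ i, av i • wv i = ∑ i, av i • ((BV i : H) - wv i) := by
          rw [hxsum, ← Finset.sum_sub_distrib]
          congr 1
          funext i
          rw [smul_sub]
        rw [hsplit]
        calc ‖∑ i, av i • ((BV i : H) - wv i)‖
            ≤ ∑ i, ‖av i • ((BV i : H) - wv i)‖ := norm_sum_le _ _
          _ ≤ ∑ _i : Fin d, η / d := by
              refine Finset.sum_le_sum fun i _ => ?_
              rw [norm_smul]
              calc ‖av i‖ * ‖(BV i : H) - wv i‖ ≤ 1 * (η / d) := by
                    apply mul_le_mul
                    · calc ‖av i‖ ≤ ‖av‖ := euclid_coord_le av i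
                        _ = 1 := havn
                    · rw [← dist_eq_norm]; exact (hwd i).le
                    · positivity
                    · norm_num
                _ = η / d := one_mul _
          _ = d * (η / d) := by
              rw [Finset.sum_const, Finset.card_univ, Fintype.card_fin, nsmul_eq_mul]
          _ = η := by field_simp
      calc Metric.infDist x ((galerkinSubspace A (L n) a b : Set H))
          ≤ dist x (∑ i, av i • wv i) := Metric.infDist_le_dist_of_mem hsummem
        _ = ‖x - ∑ i, av i • wv i‖ := dist_eq_norm _ _
        _ ≤ η := hbound
    -- conclude convergence of subDelta
    rw [Metric.tendsto_nhds]
    intro ε hε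
    set η := min (ε / 4) (1 / 2) with hηdef
    have hη0 : 0 < η := lt_min (by linarith) one_half_pos
    have hη1 : η ≤ 1 / 2 := min_le_right _ _
    have hη4 : η ≤ ε / 4 := min_le_left _ _
    filter_upwards [hVapprox η hη0, hev] with n hn hdim
    have hkey := delta_lemma (LinearMap.range (E : H →ₗ[ℂ] H)) (galerkinSubspace A (L n) a b)
      hη0.le (by linarith) (by rw [hd]; exact hdim) hn
    have hfrac : 0 ≤ η / (1 - η) := div_nonneg hη0.le (by linarith)
    have hsub : subDelta (galerkinSubspace A (L n) a b) (LinearMap.range (E : H →ₗ[ℂ] H)) ≤ η / (1 - η) :=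
      subDelta_le _ _ hfrac hkey
    have hfr : η / (1 - η) ≤ 2 * η := by
      rw [div_le_iff₀ (by linarith)]
      nlinarith
    rw [Real.dist_eq, sub_zero, abs_of_nonneg (subDelta_nonneg _ _)]
    calc subDelta (galerkinSubspace A (L n) a b) (LinearMap.range (E : H →ₗ[ℂ] H))
        ≤ η / (1 - η) := hsub
      _ ≤ 2 * η := hfr
      _ ≤ ε / 2 := by linarith
      _ < ε := by linarith
  · -- backward direction
    rintro ⟨nj, hmono, hgt⟩ hT
    have hge : ∀ j, 1 ≤ subDelta (galerkinSubspace A (L (nj j)) a b) (LinearMap.range (E : H →ₗ[ℂ] H)) := by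
      intro j
      set M := galerkinSubspace A (L (nj j)) a b with hM
      set q : M →ₗ[ℂ] LinearMap.range (E : H →ₗ[ℂ] H) :=
        (Submodule.orthogonalProjectionOnto (LinearMap.range (E : H →ₗ[ℂ] H))).toLinearMap.comp (Submodule.subtype M)
        with hq
      have hninj : ¬ Function.Injective q := by
        intro hinj
        have h1 := LinearMap.finrank_le_finrank_of_injective hinj
        rw [hd] at h1
        exact absurd h1 (not_le.mpr (hgt j))
      have hker : LinearMap.ker q ≠ ⊥ := fun hk => hninj (LinearMap.ker_eq_bot.mp hk)
      obtain ⟨x, hxker, hx0⟩ := (Submodule.ne_bot_iff _).mp hker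
      have hxq : Submodule.orthogonalProjectionOnto (LinearMap.range (E : H →ₗ[ℂ] H)) (x : H) = 0 :=
        LinearMap.mem_ker.mp hxker
      have hxperp : (x : H) ∈ (LinearMap.range (E : H →ₗ[ℂ] H) : Submodule ℂ H)ᗮ :=
        Submodule.orthogonalProjectionOnto_eq_zero_iff.mp hxq
      have hxH : (x : H) ≠ 0 := fun hh => hx0 (Subtype.ext hh)
      have hxn : (0:ℝ) < ‖(x : H)‖ := norm_pos_iff.mpr hxH
      set u := ((‖(x : H)‖ : ℂ))⁻¹ • (x : H) with hu
      have huM : u ∈ M := Submodule.smul_mem _ _ x.2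
      have huperp : u ∈ (LinearMap.range (E : H →ₗ[ℂ] H) : Submodule ℂ H)ᗮ :=
        Submodule.smul_mem _ _ hxperp
      have hun : ‖u‖ = 1 := by
        rw [hu, norm_smul, norm_inv, Complex.norm_real, Real.norm_eq_abs, abs_of_pos hxn]
        exact inv_mul_cancel₀ hxn.ne'
      have hinf : 1 ≤ Metric.infDist u ((LinearMap.range (E : H →ₗ[ℂ] H) : Submodule ℂ H) : Set H) := by
        by_contra hc
        push_neg at hc
        obtain ⟨y, hyV, hyd⟩ :=
          (Metric.infDist_lt_iff ⟨0, Submodule.zero_mem _⟩).mp hc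
        have hperp : ⟪u, y⟫_ℂ = 0 :=
          (Submodule.mem_orthogonal' _ u).mp huperp y hyV
        have hpy : ‖u - y‖ ^ 2 = ‖u‖ ^ 2 + ‖y‖ ^ 2 := by
          rw [@norm_sub_sq ℂ, hperp]
          simp
        rw [dist_eq_norm] at hyd
        nlinarith [norm_nonneg (u - y), norm_nonneg y, hyd, hun]
      have hle := le_subDelta M (LinearMap.range (E : H →ₗ[ℂ] H)) huM hun
      linarith
    have h2 : Tendsto
        (fun j => subDelta (galerkinSubspace A (L (nj j)) a b) (LinearMap.range (E : H →ₗ[ℂ] H)))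
        atTop (nhds 0) := hT.comp hmono.tendsto_atTop
    have h3 := h2.eventually (gt_mem_nhds one_pos)
    obtain ⟨j, hj⟩ := h3.exists
    exact absurd (hge j) (not_le.mpr hj)


end
end

section
/- (Lemma 4.2, abstract form.) Let H be an infinite-dimensional complex Hilbert space, let E and P be finite-rank orthogonal projections on H, and let (Q_n) be a sequence of orthogonal projections on H converging strongly to E, i.e. ‖Q_n u − E u‖ → 0 for every u ∈ H. Then the spectra of Q_n P Q_n converge to the spectrum of EPE in the Hausdorff distance: d_H(σ(Q_n P Q_n), σ(EPE)) → 0 as n → ∞. -/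
open Filter Metric

noncomputable section

section Aux

variable {H : Type*} [NormedAddCommGroup H] [InnerProductSpace ℂ H] [CompleteSpace H]

/-- A selfadjoint idempotent has operator norm at most 1. -/
lemma aux_norm_le_one (T : H →L[ℂ] H) (h1 : IsIdempotentElem T) (h2 : IsSelfAdjoint T) :
    ‖T‖ ≤ 1 := by
  have h3 : ‖star T * T‖ = ‖T‖ * ‖T‖ := CStarRing.norm_star_mul_self
  rw [h2.star_eq, h1.eq] at h3
  nlinarith [norm_nonneg T]

/-- For selfadjoint operators, each point of the spectrum of `a` is within `‖a - b‖`
of the spectrum of `b`. -/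
lemma aux_infDist_le [Nontrivial H] (a b : H →L[ℂ] H)
    (ha : IsSelfAdjoint a) (hb : IsSelfAdjoint b) {z : ℂ} (hz : z ∈ spectrum ℂ a) :
    Metric.infDist z (spectrum ℂ b) ≤ ‖a - b‖ := by
  by_contra hcon
  push_neg at hcon
  set d : ℝ := Metric.infDist z (spectrum ℂ b) with hd
  have hd0 : 0 < d := lt_of_le_of_lt (norm_nonneg _) hcon
  -- z is not in the spectrum of b
  have hznb : z ∉ spectrum ℂ b := by
    intro hmem
    have : d = 0 := Metric.infDist_zero_of_mem hmem
    linarith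
  have him : z.im = 0 := ha.im_eq_zero_of_mem_spectrum hz
  have hconj : (starRingEnd ℂ) z = z := Complex.conj_eq_iff_im.mpr him
  have hunit : IsUnit (algebraMap ℂ (H →L[ℂ] H) z - b) := by
    by_contra h
    exact hznb (spectrum.mem_iff.mpr h)
  obtain ⟨u, hu⟩ := hunit
  -- the element and its inverse are selfadjoint
  have hcsa : IsSelfAdjoint ((u : H →L[ℂ] H)) := by
    rw [hu]
    refine IsSelfAdjoint.sub ?_ hb
    rw [IsSelfAdjoint, Algebra.algebraMap_eq_smul_one, star_smul, star_one, Complex.star_def,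
      hconj]
  have hinvsa : IsSelfAdjoint ((↑u⁻¹ : H →L[ℂ] H)) := by
    have h1 : (u : H →L[ℂ] H) * ↑u⁻¹ = 1 := u.mul_inv
    have h2 := congrArg star h1
    rw [star_mul, star_one, hcsa.star_eq] at h2
    have : star (↑u⁻¹ : H →L[ℂ] H) = ↑u⁻¹ := by
      calc star (↑u⁻¹ : H →L[ℂ] H) = star ↑u⁻¹ * ((u : H →L[ℂ] H) * ↑u⁻¹) := by
            rw [h1, mul_one]
        _ = (star (↑u⁻¹ : H →L[ℂ] H) * ↑u) * ↑u⁻¹ := by rw [mul_assoc]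
        _ = ↑u⁻¹ := by rw [h2, one_mul]
    exact this
  -- bound the norm of the inverse by 1/d
  have hspec : spectrum ℂ ((↑u⁻¹ : H →L[ℂ] H)) = (spectrum ℂ ((u : H →L[ℂ] H)))⁻¹ :=
    (spectrum.map_inv u).symm
  have hDnn : (0 : ℝ) ≤ d⁻¹ := by positivity
  have hbound : ∀ k ∈ spectrum ℂ ((↑u⁻¹ : H →L[ℂ] H)), ‖k‖₊ ≤ d.toNNReal⁻¹ := by
    intro k hk
    rw [hspec, Set.mem_inv] at hk
    rw [hu, ← spectrum.singleton_sub_eq] at hk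
    obtain ⟨x, hx1, y, hy1, hxy⟩ := Set.mem_sub.mp hk
    have hdle : d ≤ ‖k⁻¹‖ := by
      rw [← hxy]
      simp only [Set.mem_singleton_iff] at hx1
      rw [hx1]
      have := Metric.infDist_le_dist_of_mem (x := z) hy1
      rwa [dist_eq_norm] at this
    have hk0 : (0:ℝ) < ‖k‖ := by
      rcases eq_or_ne k 0 with h0 | h0
      · rw [h0] at hdle; simp at hdle; linarith
      · simpa using h0
    rw [norm_inv] at hdle
    have hkle : ‖k‖ ≤ d⁻¹ := by
      rw [le_inv_comm₀ hk0 hd0]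
      exact hdle
    rw [← NNReal.coe_le_coe, NNReal.coe_inv, Real.coe_toNNReal _ hd0.le, coe_nnnorm]
    exact hkle
  have hnorminv : ‖(↑u⁻¹ : H →L[ℂ] H)‖ ≤ d⁻¹ := by
    have h1 : spectralRadius ℂ ((↑u⁻¹ : H →L[ℂ] H)) = ‖(↑u⁻¹ : H →L[ℂ] H)‖₊ :=
      hinvsa.spectralRadius_eq_nnnorm
    have h2 : spectralRadius ℂ ((↑u⁻¹ : H →L[ℂ] H)) ≤ ((d.toNNReal⁻¹ : NNReal) : ENNReal) := by
      rw [spectralRadius]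
      refine iSup₂_le fun k hk => ?_
      exact_mod_cast hbound k hk
    rw [h1] at h2
    have h3 : ‖(↑u⁻¹ : H →L[ℂ] H)‖₊ ≤ d.toNNReal⁻¹ := by exact_mod_cast h2
    have h4 : ‖(↑u⁻¹ : H →L[ℂ] H)‖ ≤ ((d.toNNReal⁻¹ : NNReal) : ℝ) := h3
    rwa [NNReal.coe_inv, Real.coe_toNNReal _ hd0.le] at h4
  -- now show z ∉ spectrum a, contradiction
  have hsmall : ‖(↑u⁻¹ : H →L[ℂ] H) * (a - b)‖ < 1 := by
    calc ‖(↑u⁻¹ : H →L[ℂ] H) * (a - b)‖ ≤ ‖(↑u⁻¹ : H →L[ℂ] H)‖ * ‖a - b‖ := norm_mul_le _ _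
      _ ≤ d⁻¹ * ‖a - b‖ := by gcongr
      _ < d⁻¹ * d := (mul_lt_mul_iff_right₀ (inv_pos.mpr hd0)).mpr hcon
      _ = 1 := inv_mul_cancel₀ hd0.ne'
  have hfac : algebraMap ℂ (H →L[ℂ] H) z - a
      = (u : H →L[ℂ] H) * (1 - (↑u⁻¹ : H →L[ℂ] H) * (a - b)) := by
    rw [mul_sub, mul_one, ← mul_assoc, u.mul_inv, one_mul, hu]
    abel
  have : IsUnit (algebraMap ℂ (H →L[ℂ] H) z - a) := by
    rw [hfac]
    exact u.isUnit.mul (Units.oneSub _ hsmall).isUnit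
  exact (spectrum.mem_iff.mp hz) this

/-- For selfadjoint operators on a nontrivial Hilbert space, the Hausdorff distance between
the spectra is bounded by the norm of the difference. -/
lemma aux_hausdorff_le [Nontrivial H] (a b : H →L[ℂ] H)
    (ha : IsSelfAdjoint a) (hb : IsSelfAdjoint b) :
    Metric.hausdorffDist (spectrum ℂ a) (spectrum ℂ b) ≤ ‖a - b‖ := by
  refine Metric.hausdorffDist_le_of_infDist (norm_nonneg _) ?_ ?_
  · intro x hx
    exact aux_infDist_le a b ha hb hx
  · intro y hy
    have := aux_infDist_le b a hb ha hy
    rwa [norm_sub_rev] at this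

end Aux

theorem stmt11
    {H : Type*} [NormedAddCommGroup H] [InnerProductSpace ℂ H] [CompleteSpace H]
    (hinf : ¬ FiniteDimensional ℂ H)
    (E P : H →L[ℂ] H)
    (hE : IsIdempotentElem E ∧ IsSelfAdjoint E)
    (hP : IsIdempotentElem P ∧ IsSelfAdjoint P)
    (hEfr : FiniteDimensional ℂ (LinearMap.range (E : H →ₗ[ℂ] H)))
    (hPfr : FiniteDimensional ℂ (LinearMap.range (P : H →ₗ[ℂ] H)))
    (Q : ℕ → (H →L[ℂ] H))
    (hQ : ∀ n, IsIdempotentElem (Q n) ∧ IsSelfAdjoint (Q n))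
    (hconv : ∀ u : H, Tendsto (fun n => ‖Q n u - E u‖) atTop (nhds 0)) :
    Tendsto (fun n =>
        Metric.hausdorffDist (spectrum ℂ (Q n * P * Q n)) (spectrum ℂ (E * P * E)))
      atTop (nhds 0) := by
  have : Nontrivial H := by
    by_contra h
    rw [not_nontrivial_iff_subsingleton] at h
    exact hinf (Module.Finite.of_basis (Module.Basis.empty H (ι := Fin 0)))
  -- the range of P with a basis
  set V := LinearMap.range (P : H →ₗ[ℂ] H) with hV
  haveI : FiniteDimensional ℂ V := hPfr
  set k := Module.finrank ℂ V
  set bV : Module.Basis (Fin k) ℂ V := Module.finBasis ℂ V with hbV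
  set p : H →L[ℂ] V := P.codRestrict V (fun x => LinearMap.mem_range_self _ x) with hp
  set c : Fin k → (H →L[ℂ] ℂ) :=
    fun i => (LinearMap.toContinuousLinearMap (bV.coord i)).comp p with hc
  -- norm convergence of (Q n - E) * P
  have hDkey : ∀ n : ℕ, ‖(Q n - E) * P‖ ≤ ∑ i, ‖c i‖ * ‖(Q n) (bV i) - E (bV i)‖ := by
    intro n
    refine ContinuousLinearMap.opNorm_le_bound _ ?_ fun x => ?_
    · exact Finset.sum_nonneg fun i _ => mul_nonneg (norm_nonneg _) (norm_nonneg _)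
    · have hPx : P x = ∑ i, (c i x) • ((bV i : H)) := by
        have h1 : (p x : H) = P x := rfl
        have h2 : ∑ i, bV.repr (p x) i • bV i = p x := bV.sum_repr (p x)
        calc P x = ((∑ i, bV.repr (p x) i • bV i : V) : H) := by rw [h2, h1]
          _ = ∑ i, (bV.repr (p x) i) • ((bV i : H)) := by push_cast; rfl
          _ = ∑ i, (c i x) • ((bV i : H)) := by
              refine Finset.sum_congr rfl fun i _ => ?_
              congr 1
      have : ((Q n - E) * P) x = ∑ i, (c i x) • ((Q n) (bV i) - E (bV i)) := by
        calc ((Q n - E) * P) x = (Q n - E) (P x) := rfl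
          _ = (Q n - E) (∑ i, (c i x) • ((bV i : H))) := by rw [hPx]
          _ = ∑ i, (c i x) • ((Q n - E) (bV i : H)) := by
              rw [map_sum]; exact Finset.sum_congr rfl fun i _ => by rw [map_smul]
          _ = ∑ i, (c i x) • ((Q n) (bV i) - E (bV i)) := rfl
      rw [this]
      calc ‖∑ i, (c i x) • ((Q n) (bV i) - E (bV i))‖
          ≤ ∑ i, ‖(c i x) • ((Q n) (bV i) - E (bV i))‖ := norm_sum_le _ _
        _ ≤ ∑ i, (‖c i‖ * ‖(Q n) (bV i) - E (bV i)‖) * ‖x‖ := by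
            refine Finset.sum_le_sum fun i _ => ?_
            rw [norm_smul]
            calc ‖c i x‖ * ‖(Q n) (bV i) - E (bV i)‖
                ≤ (‖c i‖ * ‖x‖) * ‖(Q n) (bV i) - E (bV i)‖ := by
                  gcongr; exact (c i).le_opNorm x
              _ = (‖c i‖ * ‖(Q n) (bV i) - E (bV i)‖) * ‖x‖ := by ring
        _ = (∑ i, ‖c i‖ * ‖(Q n) (bV i) - E (bV i)‖) * ‖x‖ := by rw [Finset.sum_mul]
  have hDlim : Tendsto (fun n => ‖(Q n - E) * P‖) atTop (nhds 0) := by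
    have hsum : Tendsto (fun n => ∑ i, ‖c i‖ * ‖(Q n) (bV i) - E (bV i)‖) atTop (nhds 0) := by
      have : Tendsto (fun n => ∑ i : Fin k, ‖c i‖ * ‖(Q n) (bV i) - E (bV i)‖) atTop
          (nhds (∑ i : Fin k, (0:ℝ))) := by
        refine tendsto_finset_sum _ fun i _ => ?_
        have := (hconv (bV i)).const_mul ‖c i‖
        simpa using this
      simpa using this
    exact squeeze_zero (fun n => norm_nonneg _) hDkey hsum
  -- norm bounds
  have hEn : ‖E‖ ≤ 1 := aux_norm_le_one E hE.1 hE.2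
  have hQn : ∀ n, ‖Q n‖ ≤ 1 := fun n => aux_norm_le_one (Q n) (hQ n).1 (hQ n).2
  have hPQ : ∀ n, ‖P * (Q n - E)‖ = ‖(Q n - E) * P‖ := by
    intro n
    rw [← norm_star ((Q n - E) * P)]
    congr 1
    rw [star_mul, hP.2.star_eq, IsSelfAdjoint.star_eq]
    exact ((hQ n).2).sub hE.2
  have hmain : ∀ n, ‖Q n * P * Q n - E * P * E‖ ≤ 2 * ‖(Q n - E) * P‖ := by
    intro n
    have hdecomp : Q n * P * Q n - E * P * E
        = Q n * (P * (Q n - E)) + ((Q n - E) * P) * E := by noncomm_ring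
    calc ‖Q n * P * Q n - E * P * E‖
        = ‖Q n * (P * (Q n - E)) + ((Q n - E) * P) * E‖ := by rw [hdecomp]
      _ ≤ ‖Q n * (P * (Q n - E))‖ + ‖((Q n - E) * P) * E‖ := norm_add_le _ _
      _ ≤ ‖Q n‖ * ‖P * (Q n - E)‖ + ‖(Q n - E) * P‖ * ‖E‖ :=
          add_le_add (norm_mul_le _ _) (norm_mul_le _ _)
      _ ≤ 1 * ‖P * (Q n - E)‖ + ‖(Q n - E) * P‖ * 1 :=
          add_le_add (mul_le_mul_of_nonneg_right (hQn n) (norm_nonneg _))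
            (mul_le_mul_of_nonneg_left hEn (norm_nonneg _))
      _ = 2 * ‖(Q n - E) * P‖ := by rw [hPQ n]; ring
  -- selfadjointness of the products
  have hQPQsa : ∀ n, IsSelfAdjoint (Q n * P * Q n) := fun n => by
    have := hP.2.conjugate (Q n)
    rwa [(hQ n).2.star_eq] at this
  have hEPEsa : IsSelfAdjoint (E * P * E) := by
    have := hP.2.conjugate E
    rwa [hE.2.star_eq] at this
  -- final squeeze
  have hub : ∀ n, Metric.hausdorffDist (spectrum ℂ (Q n * P * Q n)) (spectrum ℂ (E * P * E))
      ≤ 2 * ‖(Q n - E) * P‖ := fun n =>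
    le_trans (aux_hausdorff_le _ _ (hQPQsa n) hEPEsa) (hmain n)
  have hlb : ∀ n, 0 ≤ Metric.hausdorffDist (spectrum ℂ (Q n * P * Q n))
      (spectrum ℂ (E * P * E)) := fun n => Metric.hausdorffDist_nonneg
  have h2 : Tendsto (fun n => 2 * ‖(Q n - E) * P‖) atTop (nhds 0) := by
    simpa using hDlim.const_mul 2
  exact squeeze_zero hlb hub h2

end
end
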